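/- arXiv:2104.12942 — 10 statements merged into one kernel-verified Lean document; each statement's English description precedes it below -/
import Mathlib

section
/- Let p be a prime and m, k positive integers. Then gcd(p^k+1, p^m-1) equals (2^gcd(2k,m)-1)/(2^gcd(k,m)-1) if p = 2; equals 2 if p is odd and v_2(m) ≤ v_2(k); and equals p^gcd(k,m)+1 if p is odd and v_2(m) > v_2(k), where v_2 denotes the 2-adic valuation. -/
lemma aux_dvd_pow_sub_one_iff {d a n : ℕ} (ha : 0 < a) :
    d ∣ a ^ n - 1 ↔ (a : ZMod d) ^ n = 1 := by
  have h1 : 1 ≤ a ^ n := Nat.one_le_pow n a ha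
  constructor
  · intro h
    have h2 := (Nat.modEq_iff_dvd' h1).mpr h
    have h3 := (ZMod.natCast_eq_natCast_iff _ _ _).mpr h2
    push_cast at h3
    exact h3.symm
  · intro h
    refine (Nat.modEq_iff_dvd' h1).mp ((ZMod.natCast_eq_natCast_iff _ _ _).mp ?_)
    push_cast
    exact h.symm

lemma aux_dvd_pow_add_one {d a n : ℕ} (h : d ∣ a ^ n + 1) :
    (a : ZMod d) ^ n = -1 := by
  have h2 := (ZMod.natCast_eq_zero_iff _ _).mpr h
  push_cast at h2
  exact eq_neg_of_add_eq_zero_left h2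

lemma aux_fac {x : ℕ} (hx : 1 ≤ x) : (x - 1) * (x + 1) = x * x - 1 := by
  obtain ⟨y, rfl⟩ : ∃ y, x = y + 1 := ⟨x - 1, by omega⟩
  simp only [Nat.add_sub_cancel]
  rw [show (y + 1) * (y + 1) = y * (y + 1 + 1) + 1 by ring, Nat.add_sub_cancel]

lemma aux_not_two_mul_dvd {x n : ℕ} (hx : Odd x) (hn : Odd n) :
    ¬ (2 * (x + 1) ∣ x ^ n + 1) := by
  intro h
  have hz : (2 * ((x : ℤ) + 1)) ∣ (x : ℤ) ^ n + 1 := by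
    have := Int.natCast_dvd_natCast.mpr h
    push_cast at this
    exact this
  set Q : ℤ := ∑ i ∈ Finset.range n, (x : ℤ) ^ i * (-1) ^ (n - 1 - i) with hQ
  have hgeom : Q * ((x : ℤ) + 1) = (x : ℤ) ^ n + 1 := by
    have := geom_sum₂_mul (x : ℤ) (-1) n
    rw [hn.neg_one_pow] at this
    simpa [sub_neg_eq_add] using this
  have hxne : ((x : ℤ) + 1) ≠ 0 := by positivity
  have h2Q : (2 : ℤ) ∣ Q := by
    have : 2 * ((x : ℤ) + 1) ∣ Q * ((x : ℤ) + 1) := hgeom ▸ hz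
    exact (mul_dvd_mul_iff_right hxne).mp this
  have hx1 : ((x : ℕ) : ZMod 2) = 1 := by
    rw [← ZMod.natCast_mod, Nat.odd_iff.mp hx, Nat.cast_one]
  have hn1 : ((n : ℕ) : ZMod 2) = 1 := by
    rw [← ZMod.natCast_mod, Nat.odd_iff.mp hn, Nat.cast_one]
  have hQ1 : ((Q : ZMod 2)) = 1 := by
    rw [hQ]
    push_cast
    simp [hx1, show ((-1 : ZMod 2)) = 1 from by decide, hn1]
  have hQ0 : ((Q : ZMod 2)) = 0 := (ZMod.intCast_zmod_eq_zero_iff_dvd Q 2).mpr h2Q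
  rw [hQ1] at hQ0
  exact one_ne_zero hQ0

theorem stmt_0 (p m k : ℕ) (hp : p.Prime) (hm : 0 < m) (hk : 0 < k) :
    Nat.gcd (p ^ k + 1) (p ^ m - 1) =
      if p = 2 then (2 ^ Nat.gcd (2 * k) m - 1) / (2 ^ Nat.gcd k m - 1)
      else if padicValNat 2 m ≤ padicValNat 2 k then 2
      else p ^ Nat.gcd k m + 1 := by
  haveI : Fact (Nat.Prime 2) := ⟨Nat.prime_two⟩
  have hppos : 0 < p := hp.pos
  set g := Nat.gcd k m with hgdef
  set G := Nat.gcd (2 * k) m with hGdef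
  set d := Nat.gcd (p ^ k + 1) (p ^ m - 1) with hddef
  have hgpos : 0 < g := Nat.gcd_pos_of_pos_left m hk
  have hgk : g ∣ k := Nat.gcd_dvd_left k m
  have hgm : g ∣ m := Nat.gcd_dvd_right k m
  have hpk1 : 1 ≤ p ^ k := Nat.one_le_pow k p hppos
  have hpg1 : 1 ≤ p ^ g := Nat.one_le_pow g p hppos
  have hd1 : d ∣ p ^ k + 1 := Nat.gcd_dvd_left _ _
  have hd2 : d ∣ p ^ m - 1 := Nat.gcd_dvd_right _ _
  have hdpos : 0 < d := Nat.gcd_pos_of_pos_left _ (by positivity)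
  -- d ∣ p^G - 1
  have hdG : d ∣ p ^ G - 1 := by
    have e1 : (p : ZMod d) ^ k = -1 := aux_dvd_pow_add_one hd1
    have e2 : (p : ZMod d) ^ m = 1 := (aux_dvd_pow_sub_one_iff hppos).mp hd2
    have e3 : (p : ZMod d) ^ (2 * k) = 1 := by
      rw [mul_comm, pow_mul, e1]; ring
    exact (aux_dvd_pow_sub_one_iff hppos).mpr (pow_gcd_eq_one.mpr ⟨e3, e2⟩)
  have hGg : g ∣ G := Nat.dvd_gcd (hgk.trans (dvd_mul_left k 2)) hgm
  have hG2g : G ∣ 2 * g := by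
    have : G ∣ Nat.gcd (2 * k) (2 * m) :=
      Nat.dvd_gcd (Nat.gcd_dvd_left _ _) ((Nat.gcd_dvd_right _ _).trans (dvd_mul_left m 2))
    rwa [Nat.gcd_mul_left, ← hgdef] at this
  have hmne : m ≠ 0 := hm.ne'
  have hkne : k ≠ 0 := hk.ne'
  by_cases hv : padicValNat 2 m ≤ padicValNat 2 k
  · -- gcd(2k, m) = g ; d ∣ 2
    have h2gm : ¬ (2 * g ∣ m) := by
      intro h
      have hsk : (2 : ℕ) ^ padicValNat 2 m ∣ k :=
        (pow_dvd_pow 2 hv).trans pow_padicValNat_dvd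
      have hsg : (2 : ℕ) ^ padicValNat 2 m ∣ g := Nat.dvd_gcd hsk pow_padicValNat_dvd
      have hsm : (2 : ℕ) ^ (padicValNat 2 m + 1) ∣ m := by
        calc (2 : ℕ) ^ (padicValNat 2 m + 1) = 2 * 2 ^ padicValNat 2 m := by ring
        _ ∣ 2 * g := mul_dvd_mul_left 2 hsg
        _ ∣ m := h
      have := (padicValNat_dvd_iff_le hmne).mp hsm
      omega
    have hGeq : G = g := by
      obtain ⟨c, hc⟩ := hGg
      have hcd : c ∣ 2 := by
        have : g * c ∣ g * 2 := by rw [← hc]; rw [mul_comm 2 g] at hG2g; exact hG2g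
        exact (Nat.mul_dvd_mul_iff_left hgpos).mp this
      rcases (Nat.dvd_prime Nat.prime_two).mp hcd with h1 | h1
      · subst h1; simpa using hc
      · exfalso
        apply h2gm
        have hGm : G ∣ m := Nat.gcd_dvd_right _ _
        rw [hc, h1, mul_comm] at hGm
        exact hGm
    have hdvd2 : d ∣ 2 := by
      have h1 : p ^ g - 1 ∣ p ^ k - 1 := by
        have := Nat.sub_dvd_pow_sub_pow (p ^ g) 1 (k / g)
        rwa [← pow_mul, Nat.mul_div_cancel' hgk, one_pow] at this
      have h2 : d ∣ p ^ k - 1 := (hGeq ▸ hdG).trans h1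
      have h3 := Nat.dvd_sub hd1 h2
      have h4 : p ^ k + 1 - (p ^ k - 1) = 2 := by omega
      rwa [h4] at h3
    by_cases hp2 : p = 2
    · subst hp2
      rw [if_pos rfl, hGeq]
      have hpow : (2:ℕ)^1 ≤ 2 ^ g := Nat.pow_le_pow_right (by norm_num) hgpos
      rw [Nat.div_self (by simp at hpow; omega)]
      -- d = 1 : d is odd and divides 2
      have hodd : ¬ (2 ∣ d) := by
        intro h
        have : (2 : ℕ) ∣ 2 ^ k + 1 := h.trans hd1
        have h2k : (2 : ℕ) ∣ 2 ^ k := dvd_pow_self 2 hkne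
        omega
      have := (Nat.dvd_prime Nat.prime_two).mp hdvd2
      omega
    · rw [if_neg hp2, if_pos hv]
      have hoddp : Odd p := hp.odd_of_ne_two hp2
      have h2d : 2 ∣ d := by
        refine Nat.dvd_gcd ?_ ?_
        · obtain ⟨j, hj⟩ := hoddp.pow (n := k); omega
        · obtain ⟨j, hj⟩ := hoddp.pow (n := m); omega
      exact Nat.dvd_antisymm hdvd2 h2d
  · -- padicValNat 2 k < padicValNat 2 m
    push_neg at hv
    set t := padicValNat 2 k with htdef
    have h2tk : (2 : ℕ) ^ t ∣ k := pow_padicValNat_dvd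
    have h2tm : (2 : ℕ) ^ t ∣ m := (pow_dvd_pow 2 hv.le).trans pow_padicValNat_dvd
    have h2tg : (2 : ℕ) ^ t ∣ g := Nat.dvd_gcd h2tk h2tm
    have hvg_le : padicValNat 2 g ≤ t :=
      (padicValNat_dvd_iff_le hkne).mp (pow_padicValNat_dvd.trans hgk)
    have hvg_ge : t ≤ padicValNat 2 g := (padicValNat_dvd_iff_le hgpos.ne').mp h2tg
    have hvg : padicValNat 2 g = t := le_antisymm hvg_le hvg_ge
    have hkgpos : 0 < k / g := Nat.div_pos (Nat.le_of_dvd hk hgk) hgpos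
    have hmgpos : 0 < m / g := Nat.div_pos (Nat.le_of_dvd hm hgm) hgpos
    have hoddkg : Odd (k / g) := by
      rw [Nat.odd_iff, Nat.two_dvd_ne_zero.symm]
      intro h
      have hmul := padicValNat.mul (p := 2) hgpos.ne' hkgpos.ne'
      rw [Nat.mul_div_cancel' hgk] at hmul
      have h1 : 1 ≤ padicValNat 2 (k / g) := one_le_padicValNat_of_dvd hkgpos.ne' h
      omega
    have h2gm : 2 * g ∣ m := by
      have h2mg : 2 ∣ m / g := by
        by_contra h
        have h0 : padicValNat 2 (m / g) = 0 := padicValNat.eq_zero_of_not_dvd h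
        have hmul := padicValNat.mul (p := 2) hgpos.ne' hmgpos.ne'
        rw [Nat.mul_div_cancel' hgm] at hmul
        omega
      obtain ⟨c, hc⟩ := h2mg
      have h5 : m = g * (2 * c) := by rw [← hc, Nat.mul_div_cancel' hgm]
      exact ⟨c, by rw [h5]; ring⟩
    have hGeq : G = 2 * g :=
      Nat.dvd_antisymm hG2g (Nat.dvd_gcd (mul_dvd_mul_left 2 hgk) h2gm)
    have hfac : (p ^ g - 1) * (p ^ g + 1) = p ^ (2 * g) - 1 := by
      rw [two_mul, pow_add]; exact aux_fac hpg1
    -- lower bound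
    have hlow : p ^ g + 1 ∣ d := by
      refine Nat.dvd_gcd ?_ ?_
      · have := Odd.nat_add_dvd_pow_add_pow (p ^ g) 1 hoddkg
        rwa [← pow_mul, Nat.mul_div_cancel' hgk, one_pow] at this
      · have h1 : p ^ (2 * g) - 1 ∣ p ^ m - 1 := by
          have := Nat.sub_dvd_pow_sub_pow (p ^ (2 * g)) 1 (m / (2 * g))
          rwa [← pow_mul, Nat.mul_div_cancel' h2gm, one_pow] at this
        exact (Dvd.intro_left _ hfac).trans h1
    have hup : d ∣ (p ^ g - 1) * (p ^ g + 1) := by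
      rw [hfac, ← hGeq]; exact hdG
    -- common divisors of d and p^g - 1 divide 2
    have hc2 : Nat.gcd d (p ^ g - 1) ∣ 2 := by
      have hck : Nat.gcd d (p ^ g - 1) ∣ p ^ k - 1 := by
        have h1 : p ^ g - 1 ∣ p ^ k - 1 := by
          have := Nat.sub_dvd_pow_sub_pow (p ^ g) 1 (k / g)
          rwa [← pow_mul, Nat.mul_div_cancel' hgk, one_pow] at this
        exact (Nat.gcd_dvd_right _ _).trans h1
      have hck1 : Nat.gcd d (p ^ g - 1) ∣ p ^ k + 1 := (Nat.gcd_dvd_left _ _).trans hd1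
      have := Nat.dvd_sub hck1 hck
      have h4 : p ^ k + 1 - (p ^ k - 1) = 2 := by omega
      rwa [h4] at this
    by_cases hp2 : p = 2
    · subst hp2
      have hpow : (2:ℕ)^1 ≤ 2 ^ g := Nat.pow_le_pow_right (by norm_num) hgpos
      simp only [pow_one] at hpow
      rw [if_pos rfl, hGeq, ← hfac, Nat.mul_div_cancel_left _ (by omega : 0 < 2 ^ g - 1)]
      have hcop : Nat.Coprime d (2 ^ g - 1) := by
        have hodd : ¬ (2 ∣ Nat.gcd d (2 ^ g - 1)) := by
          intro h
          have h1 : (2 : ℕ) ∣ 2 ^ g - 1 := h.trans (Nat.gcd_dvd_right _ _)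
          have h2 : (2 : ℕ) ∣ 2 ^ g := dvd_pow_self 2 hgpos.ne'
          omega
        have := (Nat.dvd_prime Nat.prime_two).mp hc2
        rcases this with h | h
        · exact h
        · exact absurd (dvd_of_eq h.symm) hodd
      have hdup : d ∣ 2 ^ g + 1 := hcop.dvd_of_dvd_mul_left hup
      exact Nat.dvd_antisymm hdup hlow
    · rw [if_neg hp2, if_neg (not_le.mpr hv)]
      have hoddp : Odd p := hp.odd_of_ne_two hp2
      -- d ∣ gcd d (p^g-1) * (p^g+1)
      set c := Nat.gcd d (p ^ g - 1) with hcdef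
      have hcpos : 0 < c := Nat.gcd_pos_of_pos_left _ hdpos
      obtain ⟨d₁, hd₁⟩ : c ∣ d := Nat.gcd_dvd_left _ _
      obtain ⟨a₁, ha₁⟩ : c ∣ p ^ g - 1 := Nat.gcd_dvd_right _ _
      have hco : Nat.Coprime d₁ a₁ := by
        have := Nat.coprime_div_gcd_div_gcd (m := d) (n := p ^ g - 1) hcpos
        rwa [← hcdef, hd₁, ha₁, Nat.mul_div_cancel_left _ hcpos,
          Nat.mul_div_cancel_left _ hcpos] at this
      have hd1div : d₁ ∣ p ^ g + 1 := by
        have h1 : c * d₁ ∣ c * (a₁ * (p ^ g + 1)) := by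
          rw [← hd₁, ← mul_assoc, ← ha₁]; exact hup
        have h2 : d₁ ∣ a₁ * (p ^ g + 1) := (Nat.mul_dvd_mul_iff_left hcpos).mp h1
        exact hco.dvd_of_dvd_mul_left h2
      have hd2pg : d ∣ 2 * (p ^ g + 1) := by
        calc d = c * d₁ := hd₁
        _ ∣ c * (p ^ g + 1) := mul_dvd_mul_left c hd1div
        _ ∣ 2 * (p ^ g + 1) := mul_dvd_mul_right hc2 _
      obtain ⟨e, he⟩ := hlow
      have hedvd : e ∣ 2 := by
        have : (p ^ g + 1) * e ∣ (p ^ g + 1) * 2 := by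
          rw [← he, mul_comm (p ^ g + 1) 2]; exact hd2pg
        exact (Nat.mul_dvd_mul_iff_left (by positivity : 0 < p ^ g + 1)).mp this
      rcases (Nat.dvd_prime Nat.prime_two).mp hedvd with h | h
      · rw [he, h, mul_one]
      · exfalso
        have hdd : 2 * (p ^ g + 1) ∣ p ^ k + 1 := by
          have hde : d = 2 * (p ^ g + 1) := by rw [he, h]; ring
          rw [← hde]; exact hd1
        have := aux_not_two_mul_dvd (x := p ^ g) (n := k / g) (hoddp.pow) hoddkg
        rw [← pow_mul, Nat.mul_div_cancel' hgk] at this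
        exact this hdd
end

section
/- Let F(x) = x^{2^k+1} be the Gold function over GF(2^m) with 1 ≤ k < m. Then F is PcN with respect to c ∈ GF(2^m) with c ≠ 1 and c ≠ 0 if and only if v_2(m) ≤ v_2(k) and c ∈ GF(2^{gcd(k,m)}). -/
-- dvd implies padicValNat le
lemma val_le_of_dvd {a b : ℕ} (ha : a ≠ 0) (hb : b ≠ 0) (h : a ∣ b) :
    padicValNat 2 a ≤ padicValNat 2 b := by
  rw [← Nat.factorization_def a Nat.prime_two, ← Nat.factorization_def b Nat.prime_two]
  exact (Nat.factorization_le_iff_dvd ha hb).mpr h 2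

lemma dvd_of_dvd_two_mul {r k : ℕ} (hr : r ≠ 0) (hk : k ≠ 0) (h2k : r ∣ 2 * k)
    (hv : padicValNat 2 r ≤ padicValNat 2 k) : r ∣ k := by
  rw [← Nat.factorization_le_iff_dvd hr hk]
  intro p
  rcases eq_or_ne p 2 with rfl | hp2
  · rw [Nat.factorization_def r Nat.prime_two, Nat.factorization_def k Nat.prime_two]
    exact hv
  · have := (Nat.factorization_le_iff_dvd hr (by positivity)).mpr h2k p
    have h20 : (Nat.factorization 2) p = 0 := by
      rw [Nat.Prime.factorization Nat.prime_two]
      simp [hp2.symm]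
    rwa [Nat.factorization_mul two_ne_zero hk, Finsupp.add_apply, h20, zero_add] at this

lemma NT_A {k m : ℕ} (hk : k ≠ 0) (hm : m ≠ 0) (h : padicValNat 2 m ≤ padicValNat 2 k) :
    Nat.Coprime (2 ^ k + 1) (2 ^ m - 1) := by
  by_contra hg
  set g := Nat.gcd (2 ^ k + 1) (2 ^ m - 1) with hgdef
  have hg1 : g ≠ 1 := hg
  set p := g.minFac with hp
  have pp : p.Prime := Nat.minFac_prime hg1
  haveI : Fact p.Prime := ⟨pp⟩
  have hpk : p ∣ 2 ^ k + 1 := dvd_trans (Nat.minFac_dvd g) (Nat.gcd_dvd_left _ _)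
  have hpm : p ∣ 2 ^ m - 1 := dvd_trans (Nat.minFac_dvd g) (Nat.gcd_dvd_right _ _)
  have hp2 : p ≠ 2 := by
    intro h2
    rw [h2] at hpk
    have : (2:ℕ) ∣ 1 := (Nat.dvd_add_right (dvd_pow_self 2 hk)).mp hpk
    norm_num at this
  -- move to ZMod p
  have h2k : (2 : ZMod p) ^ k = -1 := by
    have : ((2 ^ k + 1 : ℕ) : ZMod p) = 0 := (ZMod.natCast_eq_zero_iff _ _).mpr hpk
    push_cast at this
    linear_combination this
  have h2m : (2 : ZMod p) ^ m = 1 := by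
    have h1 : (1:ℕ) ≤ 2 ^ m := Nat.one_le_two_pow
    have : ((2 ^ m - 1 : ℕ) : ZMod p) = 0 := (ZMod.natCast_eq_zero_iff _ _).mpr hpm
    rw [Nat.cast_sub h1] at this
    push_cast at this
    linear_combination this
  have hne : (-1 : ZMod p) ≠ 1 := by
    intro hh
    have : ((2:ℕ) : ZMod p) = 0 := by push_cast; linear_combination -hh
    have hd := (ZMod.natCast_eq_zero_iff 2 p).mp this
    have := (Nat.prime_dvd_prime_iff_eq pp Nat.prime_two).mp hd
    exact hp2 this
  have hfin : IsOfFinOrder (2 : ZMod p) := isOfFinOrder_iff_pow_eq_one.mpr ⟨m, Nat.pos_of_ne_zero hm, h2m⟩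
  set r := orderOf (2 : ZMod p) with hr
  have hr0 : r ≠ 0 := hfin.orderOf_pos.ne'
  have hrm : r ∣ m := orderOf_dvd_of_pow_eq_one h2m
  have hr2k : r ∣ 2 * k := orderOf_dvd_of_pow_eq_one (by
    rw [pow_mul']  -- (2^k)^2
    rw [h2k]; ring)
  have hrk : ¬ r ∣ k := by
    intro hdvd
    have : (2 : ZMod p) ^ k = 1 := orderOf_dvd_iff_pow_eq_one.mp hdvd
    rw [h2k] at this
    exact hne this
  exact hrk (dvd_of_dvd_two_mul hr0 hk hr2k (le_trans (val_le_of_dvd hr0 hm hrm) h))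

lemma NT_B {k m : ℕ} (hk : k ≠ 0) (hm : m ≠ 0) (h : padicValNat 2 k < padicValNat 2 m) :
    ¬ Nat.Coprime (2 ^ k + 1) (2 ^ m - 1) := by
  set d := Nat.gcd k m with hd
  have hd0 : d ≠ 0 := Nat.gcd_ne_zero_left hk
  have hfac : d.factorization = k.factorization ⊓ m.factorization := Nat.factorization_gcd hk hm
  have hvd : padicValNat 2 d = padicValNat 2 k := by
    have h2 : d.factorization 2 = min (k.factorization 2) (m.factorization 2) := by
      rw [hfac]; rfl
    rw [Nat.factorization_def d Nat.prime_two, Nat.factorization_def k Nat.prime_two,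
      Nat.factorization_def m Nat.prime_two] at h2
    omega
  -- 2d ∣ m
  have h2dm : 2 * d ∣ m := by
    rw [← Nat.factorization_le_iff_dvd (by positivity) hm]
    intro p
    have hdm : d.factorization p ≤ m.factorization p := by
      rw [hfac]; exact inf_le_right
    rcases eq_or_ne p 2 with rfl | hp2
    · have h2f : (Nat.factorization (2*d)) 2 = 1 + d.factorization 2 := by
        rw [Nat.factorization_mul two_ne_zero hd0, Finsupp.add_apply,
          Nat.Prime.factorization_self Nat.prime_two]
      rw [h2f, Nat.factorization_def d Nat.prime_two, Nat.factorization_def m Nat.prime_two, hvd]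
      omega
    · have h20 : (Nat.factorization 2) p = 0 := by
        rw [Nat.Prime.factorization Nat.prime_two]; simp [hp2.symm]
      rw [Nat.factorization_mul two_ne_zero hd0, Finsupp.add_apply, h20, zero_add]
      exact hdm
  -- k / d odd
  have hdk : d ∣ k := Nat.gcd_dvd_left k m
  have hodd : Odd (k / d) := by
    rw [Nat.odd_iff]
    by_contra he
    have h2 : 2 ∣ k / d := by omega
    have : 2 * d ∣ k := by
      obtain ⟨t, ht⟩ := h2
      refine ⟨t, ?_⟩
      have hkd : d * (k / d) = k := Nat.mul_div_cancel' hdk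
      have h3 : d * (2 * t) = 2 * d * t := by ring
      rw [← hkd, ht, h3]
    have := val_le_of_dvd (by positivity) hk this
    have h2v : padicValNat 2 (2 * d) = 1 + padicValNat 2 d := by
      rw [padicValNat.mul two_ne_zero hd0, padicValNat.self one_lt_two]
    omega
  -- 2^d + 1 divides both
  have hdiv1 : 2 ^ d + 1 ∣ 2 ^ k + 1 := by
    have := Odd.nat_add_dvd_pow_add_pow (2 ^ d) 1 hodd
    rwa [one_pow, ← pow_mul, Nat.mul_div_cancel' hdk] at this
  have hdiv2 : 2 ^ d + 1 ∣ 2 ^ m - 1 := by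
    obtain ⟨t, ht⟩ := h2dm
    have h1 : (2:ℕ) ^ d + 1 ∣ 2 ^ (2 * d) - 1 := by
      have : (2:ℕ) ^ (2 * d) - 1 = (2 ^ d + 1) * (2 ^ d - 1) := by
        have h2d : (1:ℕ) ≤ 2 ^ d := Nat.one_le_two_pow
        obtain ⟨s, hs⟩ := Nat.exists_eq_add_of_le h2d
        rw [two_mul, pow_add, hs, Nat.add_sub_cancel_left]
        exact Nat.sub_eq_of_eq_add (by ring)
      rw [this]; exact Dvd.intro _ rfl
    have h2 : (2:ℕ) ^ (2 * d) - 1 ∣ 2 ^ m - 1 := by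
      have := Nat.sub_dvd_pow_sub_pow (2 ^ (2 * d)) 1 t
      rwa [one_pow, ← pow_mul, ← ht] at this
    exact h1.trans h2
  intro hcop
  have hdg : 2 ^ d + 1 ∣ Nat.gcd (2 ^ k + 1) (2 ^ m - 1) := Nat.dvd_gcd hdiv1 hdiv2
  rw [hcop] at hdg
  have := Nat.le_of_dvd one_pos hdg
  have : (1:ℕ) ≤ 2 ^ d := Nat.one_le_two_pow
  omega

section FieldLemmas
variable {F : Type*} [Field F]

lemma pow_pow_two (c : F) (a b : ℕ) : (c ^ (2:ℕ) ^ a) ^ (2:ℕ) ^ b = c ^ (2:ℕ) ^ (a + b) := by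
  rw [← pow_mul, ← pow_add]

lemma fix_mul {c : F} {a : ℕ} (h : c ^ (2:ℕ) ^ a = c) (t : ℕ) : c ^ (2:ℕ) ^ (a * t) = c := by
  induction t with
  | zero => simp
  | succ n ih =>
      have : a * (n + 1) = a * n + a := by ring
      rw [this, ← pow_pow_two, ih, h]

lemma fix_gcd : ∀ a : ℕ, ∀ b : ℕ, ∀ c : F, c ^ (2:ℕ) ^ a = c → c ^ (2:ℕ) ^ b = c →
    c ^ (2:ℕ) ^ (Nat.gcd a b) = c := by
  intro a
  induction a using Nat.strong_induction_on with
  | _ a ih =>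
    intro b c ha hb
    rcases Nat.eq_zero_or_pos a with rfl | hpos
    · simpa using hb
    · rw [Nat.gcd_rec a b]
      refine ih (b % a) (Nat.mod_lt b hpos) a c ?_ ha
      have hdiv : b % a + a * (b / a) = b := Nat.mod_add_div b a
      calc c ^ (2:ℕ) ^ (b % a) = (c ^ (2:ℕ) ^ (a * (b / a))) ^ (2:ℕ) ^ (b % a) := by
            rw [fix_mul ha]
        _ = c ^ (2:ℕ) ^ (a * (b / a) + b % a) := pow_pow_two ..
        _ = c := by rw [Nat.add_comm, hdiv, hb]

variable [Fintype F]

lemma pow_two_pow_bij (hchar : CharP F 2) (j : ℕ) :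
    Function.Bijective (fun x : F => x ^ (2:ℕ) ^ j) := by
  haveI := hchar
  haveI : Fact (Nat.Prime 2) := ⟨Nat.prime_two⟩
  have hinj : Function.Injective (fun x : F => x ^ (2:ℕ) ^ j) := by
    intro x y hxy
    simp only at hxy
    have : (x - y) ^ (2:ℕ) ^ j = 0 := by
      rw [sub_pow_char_pow, hxy, sub_self]
    have := pow_eq_zero_iff (by positivity : (2:ℕ)^j ≠ 0) |>.mp this
    exact sub_eq_zero.mp this
  exact (Finite.injective_iff_bijective).mp hinj

lemma pow_N_bij {N : ℕ} (hN : N ≠ 0) (hcop : Nat.Coprime N (Fintype.card F - 1)) :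
    Function.Bijective (fun x : F => x ^ N) := by
  have hinj : Function.Injective (fun x : F => x ^ N) := by
    intro x y hxy
    simp only at hxy
    rcases eq_or_ne x 0 with rfl | hx
    · rw [zero_pow hN] at hxy
      exact (pow_eq_zero_iff hN |>.mp hxy.symm).symm
    rcases eq_or_ne y 0 with rfl | hy
    · rw [zero_pow hN] at hxy
      exact pow_eq_zero_iff hN |>.mp hxy
    · letI := Classical.decEq F
      set ux := Units.mk0 x hx
      set uy := Units.mk0 y hy
      have hu : ux ^ N = uy ^ N := by
        ext
        simpa [ux, uy] using hxy
      have hz : (ux * uy⁻¹) ^ N = 1 := by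
        rw [mul_pow, hu, inv_pow, mul_inv_cancel]
      have h1 : orderOf (ux * uy⁻¹) ∣ N := orderOf_dvd_of_pow_eq_one hz
      have h2 : orderOf (ux * uy⁻¹) ∣ Fintype.card Fˣ := orderOf_dvd_card
      rw [Fintype.card_units] at h2
      have : orderOf (ux * uy⁻¹) ∣ 1 := hcop ▸ Nat.dvd_gcd h1 h2
      have : ux * uy⁻¹ = 1 := orderOf_eq_one_iff.mp (Nat.dvd_one.mp this)
      have : ux = uy := by
        have := mul_eq_one_iff_eq_inv.mp this
        simpa using this
      simpa [ux, uy, Units.ext_iff] using this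
  exact (Finite.injective_iff_bijective).mp hinj

lemma exists_root_of_not_coprime {N : ℕ} (hN : N ≠ 0) (hcard1 : 1 < Fintype.card F)
    (hncop : ¬ Nat.Coprime N (Fintype.card F - 1)) :
    ∃ ζ : F, ζ ≠ 1 ∧ ζ ^ N = 1 := by
  letI := Classical.decEq F
  set g := Nat.gcd N (Fintype.card F - 1) with hg
  have hg1 : g ≠ 1 := hncop
  have pp : g.minFac.Prime := Nat.minFac_prime hg1
  have hpcard : g.minFac ∣ Fintype.card Fˣ := by
    rw [Fintype.card_units]
    exact (Nat.minFac_dvd g).trans (Nat.gcd_dvd_right _ _)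
  haveI : Fact g.minFac.Prime := ⟨pp⟩
  obtain ⟨ζ, hζ⟩ := exists_prime_orderOf_dvd_card g.minFac hpcard
  refine ⟨(ζ : F), ?_, ?_⟩
  · intro h1
    have h1' : ζ = 1 := Units.ext h1
    rw [h1', orderOf_one] at hζ
    exact pp.one_lt.ne' hζ.symm
  · have h3 : ζ ^ N = 1 := orderOf_dvd_iff_pow_eq_one.mp (hζ ▸ (Nat.minFac_dvd g).trans (Nat.gcd_dvd_left _ _))
    have := congrArg (Units.val) h3
    simpa using this

end FieldLemmas


section Gold
variable {F : Type*} [Field F] [CharP F 2]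

lemma gold_expand (k : ℕ) (x a : F) :
    (x + a) ^ (2 ^ k + 1) = x ^ (2 ^ k) * x + a * x ^ (2 ^ k) + a ^ (2 ^ k) * x + a ^ (2 ^ k) * a := by
  haveI : Fact (Nat.Prime 2) := ⟨Nat.prime_two⟩
  rw [pow_succ, add_pow_char_pow]
  ring

end Gold

theorem stmt_4 (m k : ℕ) (hk : 1 ≤ k) (hkm : k < m)
    (F : Type*) [Field F] [Fintype F] (hcard : Fintype.card F = 2 ^ m)
    (c : F) (hc1 : c ≠ 1) (hc0 : c ≠ 0) :
    (∀ a b : F, ∃! x : F, (x + a) ^ (2 ^ k + 1) + c * x ^ (2 ^ k + 1) = b) ↔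
      (padicValNat 2 m ≤ padicValNat 2 k ∧ c ^ (2 ^ Nat.gcd k m) = c) := by
  have hk0 : k ≠ 0 := by omega
  have hm0 : m ≠ 0 := by omega
  -- characteristic 2
  obtain ⟨p, hp⟩ := CharP.exists F
  haveI := hp
  obtain ⟨n, pp, hcard'⟩ := FiniteField.card F p
  have hp2 : p = 2 := by
    have hdvd : p ∣ 2 ^ m := by
      rw [← hcard, hcard']
      exact dvd_pow_self p (by exact_mod_cast n.ne_zero)
    exact (Nat.prime_dvd_prime_iff_eq pp Nat.prime_two).mp (pp.dvd_of_dvd_pow hdvd)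
  subst hp2
  haveI : CharP F 2 := hp
  haveI : Fact (Nat.Prime 2) := ⟨Nat.prime_two⟩
  have h2 : (2 : F) = 0 := by exact_mod_cast CharP.cast_eq_zero F 2
  have hN0 : 2 ^ k + 1 ≠ 0 := by positivity
  have hu : (1 : F) + c ≠ 0 := by
    intro h
    apply hc1
    have hcn : c = -1 := eq_neg_of_add_eq_zero_right h
    rw [CharTwo.neg_eq] at hcn
    exact hcn
  have hcm : c ^ (2:ℕ) ^ m = c := by
    have := FiniteField.pow_card c
    rwa [hcard] at this
  constructor
  · -- forward
    intro H
    -- injectivity of x ↦ x^(2^k+1)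
    have hinj : Function.Injective (fun x : F => x ^ (2 ^ k + 1)) := by
      intro x y hxy
      simp only at hxy
      obtain ⟨z, hz, huni⟩ := H 0 (x ^ (2 ^ k + 1) + c * x ^ (2 ^ k + 1))
      have e1 : x = z := huni x (by simp only [add_zero])
      have e2 : y = z := huni y (by simp only [add_zero, hxy])
      rw [e1, e2]
    have hcop : Nat.Coprime (2 ^ k + 1) (Fintype.card F - 1) := by
      by_contra hn
      have hcard1 : 1 < Fintype.card F := Fintype.one_lt_card
      obtain ⟨ζ, hζ1, hζN⟩ := exists_root_of_not_coprime hN0 hcard1 hn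
      exact hζ1 (hinj (by simpa using hζN))
    constructor
    · by_contra hlt
      push_neg at hlt
      rw [hcard] at hcop
      exact NT_B hk0 hm0 hlt hcop
    · -- c ^ (2^k) = c, then gcd
      have hck : c ^ (2:ℕ) ^ k = c := by
        by_contra hcc
        set u := (1 : F) + c with hudef
        set w := u ^ (2:ℕ) ^ k with hwdef
        have hw0 : w ≠ 0 := pow_ne_zero _ hu
        have hwval : w = 1 + c ^ (2:ℕ) ^ k := by
          rw [hwdef, hudef, add_pow_char_pow, one_pow]
        have hneq : u ≠ w := by
          rw [hudef, hwval]
          intro hh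
          exact hcc (add_left_cancel hh).symm
        have huw : u + w ≠ 0 := by
          intro hh
          apply hneq
          have : w = -u := eq_neg_of_add_eq_zero_right hh
          rw [CharTwo.neg_eq] at this
          exact this.symm
        obtain ⟨y0, hy0'⟩ := (pow_two_pow_bij ‹CharP F 2› k).surjective ((u + w) * ((u * w)⁻¹))
        simp only at hy0'
        have hY0 : u * w * y0 ^ (2:ℕ) ^ k = u + w := by
          rw [hy0']
          field_simp
        have hy00 : y0 ≠ 0 := by
          intro hh
          rw [hh, zero_pow (by positivity), mul_zero] at hY0
          exact huw hY0.symm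
        set x1 := u⁻¹ with hx1def
        have hx1 : u * x1 = 1 := mul_inv_cancel₀ hu
        have hX1 : w * x1 ^ (2:ℕ) ^ k = 1 := by
          rw [hx1def, inv_pow, ← hwdef]
          exact mul_inv_cancel₀ hw0
        have hA : ∀ x : F, (x + 1) ^ (2 ^ k + 1) + c * x ^ (2 ^ k + 1) =
            u * (x ^ (2 ^ k) * x) + x ^ (2 ^ k) + x + 1 := by
          intro x
          rw [gold_expand, pow_succ, hudef]
          ring
        have hval : (y0 + x1 + 1) ^ (2 ^ k + 1) + c * (y0 + x1) ^ (2 ^ k + 1) =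
            (x1 + 1) ^ (2 ^ k + 1) + c * x1 ^ (2 ^ k + 1) := by
          rw [hA (y0 + x1), hA x1, add_pow_char_pow]
          linear_combination (y0 ^ (2:ℕ) ^ k) * hx1 + (y0 - u * (y0 ^ (2:ℕ) ^ k) * y0) * hX1 +
            (x1 ^ (2:ℕ) ^ k * y0) * hY0 + (u * (x1 ^ (2:ℕ) ^ k) * y0 + y0 + y0 ^ (2:ℕ) ^ k) * h2
        obtain ⟨z, hz, huni⟩ := H 1 ((x1 + 1) ^ (2 ^ k + 1) + c * x1 ^ (2 ^ k + 1))
        have e1 : x1 = z := huni x1 rfl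
        have e2 : y0 + x1 = z := huni (y0 + x1) hval
        apply hy00
        exact add_eq_right.mp (e2.trans e1.symm)
      exact fix_gcd k m c hck hcm
  · -- backward
    rintro ⟨hv, hcgcd⟩ a b
    have hck : c ^ (2:ℕ) ^ k = c := by
      have := fix_mul hcgcd (k / Nat.gcd k m)
      rwa [Nat.mul_div_cancel' (Nat.gcd_dvd_left k m)] at this
    have hufix : ((1:F) + c) ^ (2:ℕ) ^ k = 1 + c := by
      rw [add_pow_char_pow, one_pow, hck]
    set t := a * (1 + c)⁻¹ with htdef
    have ht : (1 + c) * t = a := by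
      rw [htdef, mul_comm a, ← mul_assoc, mul_inv_cancel₀ hu, one_mul]
    have htk : (1 + c) * t ^ (2:ℕ) ^ k = a ^ (2:ℕ) ^ k := by
      calc (1 + c) * t ^ (2:ℕ) ^ k = ((1:F) + c) ^ (2:ℕ) ^ k * t ^ (2:ℕ) ^ k := by rw [hufix]
        _ = ((1 + c) * t) ^ (2:ℕ) ^ k := (mul_pow _ _ _).symm
        _ = a ^ (2:ℕ) ^ k := by rw [ht]
    set r := a ^ (2 ^ k) * a - (1 + c) * (t ^ (2 ^ k) * t) with hrdef
    have hId : ∀ x : F, (x + a) ^ (2 ^ k + 1) + c * x ^ (2 ^ k + 1) =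
        (1 + c) * ((x + t) ^ (2 ^ k) * (x + t)) + r := by
      intro x
      rw [hrdef, gold_expand, add_pow_char_pow, pow_succ x]
      linear_combination (-(x ^ (2:ℕ) ^ k)) * ht - x * htk
    have hcop : Nat.Coprime (2 ^ k + 1) (Fintype.card F - 1) := by
      rw [hcard]
      exact NT_A hk0 hm0 hv
    have hbij := pow_N_bij hN0 hcop (F := F)
    obtain ⟨y, hy⟩ := hbij.surjective ((b - r) * (1 + c)⁻¹)
    simp only at hy
    have hβ : (1 + c) * ((b - r) * (1 + c)⁻¹) = b - r := by
      rw [mul_comm (b - r), ← mul_assoc, mul_inv_cancel₀ hu, one_mul]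
    refine ⟨y - t, ?_, ?_⟩
    · show (y - t + a) ^ (2 ^ k + 1) + c * (y - t) ^ (2 ^ k + 1) = b
      rw [hId, sub_add_cancel, ← pow_succ, hy, hβ]
      ring
    · intro x' hx'
      rw [hId x'] at hx'
      have h1 : (1 + c) * ((x' + t) ^ (2 ^ k) * (x' + t)) = (1 + c) * (y ^ (2 ^ k) * y) := by
        rw [← pow_succ] at hx'
        rw [← pow_succ, ← pow_succ, hy, hβ]
        exact eq_sub_of_add_eq hx'
      have h2' : (x' + t) ^ (2 ^ k + 1) = y ^ (2 ^ k + 1) := by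
        rw [pow_succ, pow_succ]
        exact mul_left_cancel₀ hu h1
      have := hbij.injective h2'
      exact eq_sub_of_add_eq this
end

section
/- Let p be an odd prime with p^m ≡ 3 (mod 4) and p^k ≡ 3 (mod 4). Then gcd((p^k - 1)(p^m - 1), p^m + 1) = 4. -/
theorem stmt_7 (p m k : ℕ) (hp : p.Prime) (hodd : Odd p) (hm : 0 < m) (hk : 0 < k)
    (h3m : p ^ m % 4 = 3) (h3k : p ^ k % 4 = 3) :
    Nat.gcd ((p ^ k - 1) * (p ^ m - 1)) (p ^ m + 1) = 4 := by
  have hp1 : 1 ≤ p ^ k := Nat.one_le_pow _ _ hp.pos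
  have hp1m : 1 ≤ p ^ m := Nat.one_le_pow _ _ hp.pos
  -- p % 4 = 3
  have hpodd : p % 2 = 1 := Nat.odd_iff.mp hodd
  have hp4 : p % 4 = 3 := by
    have h := Nat.mod_mod_of_dvd p (by norm_num : (2:ℕ) ∣ 4)
    have hlt : p % 4 < 4 := Nat.mod_lt _ (by norm_num)
    interval_cases h' : p % 4 <;> simp_all
    · -- p % 4 = 1 case: p^m % 4 = 1
      have : p ^ m % 4 = (p % 4) ^ m % 4 := by rw [← Nat.pow_mod]
      rw [h', one_pow] at this
      omega
  -- k is odd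
  have hkodd : Odd k := by
    rcases Nat.even_or_odd k with he | ho
    · exfalso
      obtain ⟨j, rfl⟩ := he
      have : p ^ (j + j) % 4 = (p % 4) ^ (j + j) % 4 := by rw [← Nat.pow_mod]
      rw [hp4] at this
      have h9 : (3:ℕ) ^ (j + j) = 9 ^ j := by
        rw [← two_mul, pow_mul]; norm_num
      rw [h9] at this
      have : (9:ℕ) ^ j % 4 = (9 % 4) ^ j % 4 := by rw [← Nat.pow_mod]
      simp at this
      omega
    · exact ho
  set a := p ^ k - 1 with ha
  set b := p ^ m - 1 with hb
  set c := p ^ m + 1 with hc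
  have h2a : 2 ∣ a := by
    have : p ^ k % 2 = 1 := by omega
    omega
  have h2b : 2 ∣ b := by
    have : p ^ m % 2 = 1 := by omega
    omega
  have h4c : 4 ∣ c := by omega
  -- gcd b c = 2
  have hgbc : Nat.gcd b c = 2 := by
    have hd2 : Nat.gcd b c ∣ 2 := by
      have h1 : Nat.gcd b c ∣ b := Nat.gcd_dvd_left _ _
      have h2 : Nat.gcd b c ∣ c := Nat.gcd_dvd_right _ _
      have := Nat.dvd_sub h2 h1
      have hcb : c - b = 2 := by omega
      rwa [hcb] at this
    have h2d : 2 ∣ Nat.gcd b c := Nat.dvd_gcd h2b (by omega)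
    exact Nat.dvd_antisymm hd2 h2d
  -- gcd a c = 2
  have hgac : Nat.gcd a c = 2 := by
    have hd2 : Nat.gcd a c ∣ 2 := by
      set d := Nat.gcd a c with hd
      have h1 : d ∣ a := Nat.gcd_dvd_left _ _
      have h2 : d ∣ c := Nat.gcd_dvd_right _ _
      -- in ZMod d : p^k = 1 and p^m = -1
      have e1 : (p : ZMod d) ^ k = 1 := by
        have : ((p ^ k : ℕ) : ZMod d) = ((1 : ℕ) : ZMod d) := by
          rw [ZMod.natCast_eq_natCast_iff]
          exact ((Nat.modEq_iff_dvd' hp1).mpr h1).symm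
        push_cast at this
        exact this
      have e2 : (p : ZMod d) ^ m = -1 := by
        have : ((p ^ m + 1 : ℕ) : ZMod d) = 0 := by
          rw [ZMod.natCast_eq_zero_iff]
          exact h2
        push_cast at this
        linear_combination this
      have key : (1 : ZMod d) = -1 := by
        calc (1 : ZMod d) = ((p : ZMod d) ^ k) ^ m := by rw [e1, one_pow]
          _ = ((p : ZMod d) ^ m) ^ k := by rw [← pow_mul, ← pow_mul, mul_comm]
          _ = (-1) ^ k := by rw [e2]
          _ = -1 := hkodd.neg_one_pow
      have : ((2 : ℕ) : ZMod d) = 0 := by push_cast; linear_combination key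
      exact (ZMod.natCast_eq_zero_iff 2 d).mp this
    have h2d : 2 ∣ Nat.gcd a c := Nat.dvd_gcd h2a (by omega)
    exact Nat.dvd_antisymm hd2 h2d
  -- now conclude
  have hdvd4 : Nat.gcd (a * b) c ∣ 4 := by
    have := Nat.gcd_mul_right_dvd_mul_gcd c a b
    rw [Nat.gcd_comm] at this
    rw [Nat.gcd_comm a c] at hgac
    rw [Nat.gcd_comm b c] at hgbc
    rw [hgac, hgbc] at this
    exact this
  have h4dvd : 4 ∣ Nat.gcd (a * b) c := by
    refine Nat.dvd_gcd ?_ h4c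
    obtain ⟨x, hx⟩ := h2a
    obtain ⟨y, hy⟩ := h2b
    rw [hx, hy]
    ring_nf
    omega
  exact Nat.dvd_antisymm hdvd4 h4dvd
end

section
/- Let p be an odd prime with p^m ≡ 3 (mod 4), and let k, d be positive integers such that d(p^k+1) ≡ 2 (mod p^m - 1) and d is odd. Then F(x) = x^d is PcN over GF(p^m) with c = -1, i.e., for all a, b ∈ GF(p^m), the equation (x+a)^d + x^d = b has exactly one solution x in GF(p^m). -/
set_option maxHeartbeats 4000000 in
theorem stmt_9 (p m k d : ℕ) (hp : p.Prime) (hodd : Odd p) (hm : 0 < m) (hk : 0 < k)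
    (h3m : p ^ m % 4 = 3) (hcong : d * (p ^ k + 1) ≡ 2 [MOD p ^ m - 1]) (hd : Odd d)
    (F : Type*) [Field F] [Fintype F] (hcard : Fintype.card F = p ^ m) :
    ∀ a b : F, ∃! x : F, (x + a) ^ d + x ^ d = b := by
  classical
  haveI : Fact p.Prime := ⟨hp⟩
  have hP : CharP F (ringChar F) := ringChar.charP F
  obtain ⟨n, hrp, hn⟩ := FiniteField.card F (ringChar F)
  have hpr : ringChar F = p := by
    have h1 : p ∣ ringChar F ^ (n : ℕ) := by
      rw [← hn, hcard]; exact dvd_pow_self p hm.ne'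
    have h2 : p ∣ ringChar F := hp.dvd_of_dvd_pow h1
    exact ((Nat.prime_dvd_prime_iff_eq hp hrp).mp h2).symm
  haveI hcharF : CharP F p := hpr ▸ hP
  -- numeric facts
  have hq5 : 3 ≤ p ^ m := h3m ▸ Nat.mod_le _ 4
  have hqodd : p ^ m % 2 = 1 := by
    have := Nat.mod_mod_of_dvd (p ^ m) (by norm_num : (2:ℕ) ∣ 4)
    omega
  have hmodd : Odd m := by
    rcases Nat.even_or_odd m with he | ho
    · exfalso
      obtain ⟨t, rfl⟩ := he
      obtain ⟨c, hc⟩ := hodd.pow (n := t)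
      have he2 : p ^ (t + t) = (p ^ t) * (p ^ t) := by rw [pow_add]
      have he3 : (2*c+1) * (2*c+1) = 4*(c*c+c)+1 := by ring
      rw [he2, hc, he3] at h3m; omega
    · exact ho
  have h2F : (2:F) ≠ 0 := by
    intro h
    have := (CharP.cast_eq_zero_iff F p 2).mp (by exact_mod_cast h)
    have hp2 : p = 2 := (Nat.prime_dvd_prime_iff_eq hp Nat.prime_two).mp this
    rw [hp2] at hodd; exact (by decide : ¬ Odd 2) hodd
  have h4F : (4:F) ≠ 0 := by
    have h : (4:F) = 2*2 := by norm_num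
    rw [h]; exact mul_ne_zero h2F h2F
  have hn1 : ∀ z : F, z ≠ 0 → z ^ (p ^ m - 1) = 1 := fun z hz => by
    rw [← hcard]; exact FiniteField.pow_card_sub_one_eq_one z hz
  have hge : 2 ≤ d * (p ^ k + 1) := by
    have h1 : 1 ≤ d := hd.pos
    have h2 : 1 ≤ p ^ k := Nat.one_le_pow _ _ hp.pos
    calc 2 = 1 * 2 := by norm_num
    _ ≤ d * (p ^ k + 1) := Nat.mul_le_mul h1 (by omega)
  obtain ⟨c, hc⟩ : ∃ c, d * (p ^ k + 1) = 2 + (p ^ m - 1) * c := by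
    obtain ⟨c, hc⟩ := (Nat.modEq_iff_dvd' hge).mp hcong.symm
    exact ⟨c, by omega⟩
  have hK2 : ∀ z : F, z ≠ 0 → z ^ d * (z ^ d) ^ (p ^ k) = z ^ 2 := by
    intro z hz
    have h1 : z ^ d * (z ^ d) ^ (p ^ k) = z ^ (d * (p ^ k + 1)) := by
      rw [← pow_mul, ← pow_add]; congr 1; ring
    rw [h1, hc, pow_add, pow_mul, hn1 z hz, one_pow, mul_one]
  -- coprimality and inverse exponent
  have hco : Nat.Coprime d (p ^ m - 1) := by
    have ha : Nat.gcd d (p ^ m - 1) ∣ d * (p ^ k + 1) :=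
      Dvd.dvd.mul_right (Nat.gcd_dvd_left _ _) _
    have hb : Nat.gcd d (p ^ m - 1) ∣ (d * (p ^ k + 1) - 2) :=
      dvd_trans (Nat.gcd_dvd_right _ _) ((Nat.modEq_iff_dvd' hge).mp hcong.symm)
    have h2 : Nat.gcd d (p ^ m - 1) ∣ 2 := by
      have := Nat.dvd_sub ha hb
      have he : d * (p ^ k + 1) - (d * (p ^ k + 1) - 2) = 2 := by omega
      rwa [he] at this
    rcases (Nat.dvd_prime Nat.prime_two).mp h2 with h | h
    · exact h
    · exfalso
      have : (2:ℕ) ∣ d := h ▸ Nat.gcd_dvd_left _ _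
      rw [Nat.odd_iff] at hd; omega
  obtain ⟨d', hd'odd, hzdd'⟩ :
      ∃ D : ℕ, Odd D ∧ (∀ z : F, z ≠ 0 → (z ^ d) ^ D = z) := by
    set t := Nat.totient (p ^ m - 1) with htdef
    have ht1 : 1 ≤ t := Nat.totient_pos.mpr (by omega)
    refine ⟨d ^ (t - 1), hd.pow, ?_⟩
    have hdd'eq : d * d ^ (t - 1) = d ^ t := by
      rw [← pow_succ']; congr 1; omega
    obtain ⟨c', hc'⟩ : ∃ c', d * d ^ (t - 1) = 1 + (p ^ m - 1) * c' := by
      have h1 : d ^ t ≡ 1 [MOD p ^ m - 1] := Nat.ModEq.pow_totient hco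
      have h1' : 1 ≤ d ^ t := Nat.one_le_pow _ _ hd.pos
      obtain ⟨c', hc'⟩ := (Nat.modEq_iff_dvd' h1').mp h1.symm
      exact ⟨c', by rw [hdd'eq]; omega⟩
    intro z hz
    rw [← pow_mul, hc', pow_add, pow_one, pow_mul, hn1 z hz, one_pow, mul_one]
  have hinjd : ∀ x y : F, x ^ d = y ^ d → x = y := by
    intro x y hxy
    by_cases hx : x = 0
    · subst hx
      rw [eq_comm, zero_pow hd.pos.ne', pow_eq_zero_iff hd.pos.ne'] at hxy
      exact hxy.symm
    · have hy : y ≠ 0 := by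
        intro h; subst h
        rw [zero_pow hd.pos.ne', pow_eq_zero_iff hd.pos.ne'] at hxy
        exact hx hxy
      calc x = (x ^ d) ^ d' := (hzdd' x hx).symm
      _ = (y ^ d) ^ d' := by rw [hxy]
      _ = y := hzdd' y hy
  have hnegd : ∀ x : F, (-x) ^ d = -(x ^ d) := fun x => hd.neg_pow x
  have hoddpk : Odd (p ^ k) := hodd.pow
  have hnegpk : ∀ x : F, (-x) ^ (p ^ k) = -(x ^ (p ^ k)) := fun x => hoddpk.neg_pow x
  have hphiadd : ∀ x y : F, (x + y) ^ (p ^ k) = x ^ (p ^ k) + y ^ (p ^ k) :=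
    fun x y => add_pow_char_pow x y p k
  have hphisub : ∀ x y : F, (x - y) ^ (p ^ k) = x ^ (p ^ k) - y ^ (p ^ k) :=
    fun x y => sub_pow_char_pow x y k
  -- no square root of -1
  have hns : ∀ x y : F, y ≠ 0 → x ^ 2 = -(y ^ 2) → False := by
    intro x y hy h
    have hx : x ≠ 0 := by
      intro h0; rw [h0] at h
      have hy2 : y ^ 2 = 0 := by linear_combination h
      exact hy (pow_eq_zero_iff two_ne_zero |>.mp hy2)
    have hz : x / y ≠ 0 := div_ne_zero hx hy
    have hz2 : (x / y) ^ 2 = -1 := by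
      field_simp
      linear_combination h
    have hz4 : (x / y) ^ 4 = 1 := by
      have h4 : (x/y) ^ 4 = ((x/y) ^ 2) ^ 2 := by ring
      rw [h4, hz2]; norm_num
    obtain ⟨e, he⟩ : ∃ e, p ^ m - 1 = 4 * e + 2 := ⟨(p ^ m - 3)/4, by omega⟩
    have h1 := hn1 _ hz
    rw [he, pow_add, pow_mul, hz4, one_pow, one_mul, hz2] at h1
    exact h2F (by linear_combination -h1)
  -- square or neg-square
  have hchar2 : ringChar F ≠ 2 := by
    rw [hpr]; intro h; rw [h] at hodd; exact (by decide : ¬ Odd 2) hodd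
  have hsqor : ∀ z : F, z ≠ 0 → ∃ (ε w : F), (ε = 1 ∨ ε = -1) ∧ w ≠ 0 ∧ z = ε * w ^ 2 := by
    intro z hz
    have hx2 : (z ^ ((p ^ m - 1)/2)) * (z ^ ((p ^ m - 1)/2)) = 1 := by
      rw [← pow_add]
      have h : (p ^ m - 1)/2 + (p ^ m - 1)/2 = p ^ m - 1 := by omega
      rw [h]; exact hn1 z hz
    have hhalf : p ^ m / 2 = (p ^ m - 1)/2 := by omega
    rcases mul_self_eq_one_iff.mp hx2 with h1 | h1
    · have hsq : IsSquare z := by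
        rw [FiniteField.isSquare_iff hchar2 hz, hcard, hhalf]; exact h1
      obtain ⟨w, hw⟩ := hsq
      have hw0 : w ≠ 0 := by
        intro h0; rw [h0, mul_zero] at hw; exact hz hw
      exact ⟨1, w, Or.inl rfl, hw0, by rw [hw]; ring⟩
    · have hodd2 : Odd ((p ^ m - 1)/2) := ⟨(p ^ m - 3)/4, by omega⟩
      have hneg : (-z) ^ ((p ^ m - 1)/2) = 1 := by
        rw [hodd2.neg_pow, h1]; norm_num
      have hsq : IsSquare (-z) := by
        rw [FiniteField.isSquare_iff hchar2 (neg_ne_zero.mpr hz), hcard, hhalf]; exact hneg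
      obtain ⟨w, hw⟩ := hsq
      have hw0 : w ≠ 0 := by
        intro h0; rw [h0, mul_zero] at hw
        exact hz (by linear_combination -hw)
      exact ⟨-1, w, Or.inr rfl, hw0, by linear_combination -hw⟩
  -- K4: Frobenius-negation has no nonzero fixed point
  have hK4 : ∀ z : F, z ^ (p ^ k) = -z → z = 0 := by
    intro z hzeq
    by_contra hz
    have h2k : z ^ (p ^ (2*k)) = z := by
      have h1 : p ^ (2*k) = p ^ k * p ^ k := by rw [two_mul, pow_add]
      rw [h1, pow_mul, hzeq, hnegpk, hzeq, neg_neg]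
    have hmm : z ^ (p ^ m) = z := by rw [← hcard]; exact FiniteField.pow_card z
    have hordd : ∀ a : ℕ, z ^ (p ^ a) = z → orderOf z ∣ p ^ a - 1 := by
      intro a hza
      apply orderOf_dvd_of_pow_eq_one
      have hpa : 1 ≤ p ^ a := Nat.one_le_pow _ _ hp.pos
      have h1 : z ^ (p ^ a - 1) * z = 1 * z := by
        rw [← pow_succ, one_mul]
        have : p ^ a - 1 + 1 = p ^ a := by omega
        rw [this, hza]
      exact mul_right_cancel₀ hz h1
    have hd1 := hordd (2*k) h2k
    have hd2 := hordd m hmm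
    set N := orderOf z with hN
    have hcast : ∀ a : ℕ, orderOf z ∣ p ^ a - 1 → (p : ZMod N) ^ a = 1 := by
      intro a hdvd
      have h1le : 1 ≤ p ^ a := Nat.one_le_pow _ _ hp.pos
      have hmeq : p ^ a ≡ 1 [MOD N] := ((Nat.modEq_iff_dvd' h1le).mpr hdvd).symm
      have := (ZMod.natCast_eq_natCast_iff _ _ _).mpr hmeq
      push_cast at this
      exact this
    have ha := hcast _ hd1
    have hb := hcast _ hd2
    have hoa : orderOf ((p : ZMod N)) ∣ 2*k := orderOf_dvd_of_pow_eq_one ha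
    have hob : orderOf ((p : ZMod N)) ∣ m := orderOf_dvd_of_pow_eq_one hb
    have hg : (p : ZMod N) ^ Nat.gcd (2*k) m = 1 :=
      orderOf_dvd_iff_pow_eq_one.mp (Nat.dvd_gcd hoa hob)
    have hNg : N ∣ p ^ Nat.gcd (2*k) m - 1 := by
      have h1 : ((p ^ Nat.gcd (2*k) m : ℕ) : ZMod N) = ((1:ℕ) : ZMod N) := by
        push_cast; exact hg
      have h2 := (ZMod.natCast_eq_natCast_iff _ _ _).mp h1
      exact (Nat.modEq_iff_dvd' (Nat.one_le_pow _ _ hp.pos)).mp h2.symm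
    have hgk : Nat.gcd (2*k) m ∣ k := by
      have hgodd : ¬ (2 ∣ Nat.gcd (2*k) m) := by
        intro h2
        have : (2:ℕ) ∣ m := dvd_trans h2 (Nat.gcd_dvd_right _ _)
        rw [Nat.odd_iff] at hmodd; omega
      have hcop : Nat.Coprime (Nat.gcd (2*k) m) 2 :=
        ((Nat.Prime.coprime_iff_not_dvd Nat.prime_two).mpr hgodd).symm
      have h2k' : Nat.gcd (2*k) m ∣ k * 2 := by
        rw [mul_comm]; exact Nat.gcd_dvd_left _ _
      exact Nat.Coprime.dvd_of_dvd_mul_right hcop h2k'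
    obtain ⟨tt, htt⟩ := hgk
    have hdvd2 : p ^ Nat.gcd (2*k) m - 1 ∣ p ^ k - 1 := by
      have h1 := Nat.sub_dvd_pow_sub_pow (p ^ (Nat.gcd (2*k) m)) 1 tt
      rw [one_pow, ← pow_mul, ← htt] at h1
      exact h1
    have hNk : N ∣ p ^ k - 1 := dvd_trans hNg hdvd2
    have hone : z ^ (p ^ k - 1) = 1 := orderOf_dvd_iff_pow_eq_one.mp hNk
    have hzk : z ^ (p ^ k) = z := by
      have h1 : p ^ k - 1 + 1 = p ^ k := by
        have := Nat.one_le_pow k p hp.pos; omega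
      calc z ^ (p ^ k) = z ^ (p ^ k - 1) * z := by rw [← pow_succ, h1]
      _ = z := by rw [hone, one_mul]
    rw [hzk] at hzeq
    apply hz
    have h2z : (2:F) * z = 0 := by linear_combination hzeq
    exact (mul_eq_zero.mp h2z).resolve_left h2F
  -- MAIN INJECTIVITY
  have hinj : ∀ y₁ y₂ : F, (y₁+1)^d + (y₁-1)^d = (y₂+1)^d + (y₂-1)^d → y₁ = y₂ := by
    intro y₁ y₂ e
    by_cases hs0 : (y₁+1)^d + (y₁-1)^d = 0
    · have hz : ∀ y : F, (y+1)^d + (y-1)^d = 0 → y = 0 := by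
        intro y h0
        have h1 : (y+1)^d = (1-y)^d := by
          rw [show (1-y:F) = -(y-1) by ring, hnegd]; linear_combination h0
        have h2 := hinjd _ _ h1
        have h3 : (2:F)*y = 0 := by linear_combination h2
        exact (mul_eq_zero.mp h3).resolve_left h2F
      rw [hz y₁ hs0, hz y₂ (by rw [← e]; exact hs0)]
    · set s := (y₁+1)^d + (y₁-1)^d with hsdef
      have hs : s ≠ 0 := hs0
      have he₁ : (y₁+1)^d + (y₁-1)^d = s := rfl
      have he₂ : (y₂+1)^d + (y₂-1)^d = s := e.symm
      set g1 := s * s^(p^k)/4 with hgdef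
      have hg10 : g1 ≠ 0 := by
        rw [hgdef]
        exact div_ne_zero (mul_ne_zero hs (pow_ne_zero _ hs)) h4F
      -- the structure lemma
      have hM : ∀ y : F, y ≠ 1 → y ≠ -1 → (y+1)^d + (y-1)^d = s →
          ∃ ε W ρ : F, (ε = 1 ∨ ε = -1) ∧ W ≠ 0 ∧
            (y+1) = ε * (W * W ^ (p ^ k)) * (y-1) ∧ ρ ^ 2 = ε * (g1-1) ∧
            W ^ (p ^ k) * (1 + ε * ρ * W) = ρ - W := by
        intro y hy1 hym1 hyeq
        have hy1' : y - 1 ≠ 0 := sub_ne_zero.mpr hy1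
        have hy2' : y + 1 ≠ 0 := by
          intro h; exact hym1 (eq_neg_of_add_eq_zero_left h)
        have hu0 : (y-1)^d ≠ 0 := pow_ne_zero _ hy1'
        have hv0 : (y+1)^d ≠ 0 := pow_ne_zero _ hy2'
        have e2 : (y-1)^d * ((y-1)^d)^(p^k) = (y-1)^2 := hK2 _ hy1'
        have e3 : (y+1)^d * ((y+1)^d)^(p^k) = (y+1)^2 := hK2 _ hy2'
        have e4 : s^(p^k) = ((y+1)^d)^(p^k) + ((y-1)^d)^(p^k) := by
          rw [← hyeq]; exact hphiadd _ _
        have hg4 : 4 * g1 = s * s^(p^k) := by rw [hgdef]; field_simp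
        have hT0 : (y+1)^d / (y-1)^d ≠ 0 := div_ne_zero hv0 hu0
        obtain ⟨ε, W, hεor, hW0, hTW⟩ := hsqor _ hT0
        have hε1 : ε ≠ 0 := by rcases hεor with rfl|rfl <;> norm_num
        have hε2 : ε^2 = 1 := by rcases hεor with rfl|rfl <;> norm_num
        have hεφ : ε^(p^k) = ε := by
          rcases hεor with rfl|rfl
          · exact one_pow _
          · exact hoddpk.neg_one_pow
        have hεd' : ε^d' = ε := by
          rcases hεor with rfl|rfl
          · exact one_pow _
          · exact hd'odd.neg_one_pow
        have hvW : (y+1)^d = ε * W^2 * (y-1)^d := by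
          rw [div_eq_iff hu0] at hTW; exact hTW
        have hφvW : ((y+1)^d)^(p^k) = ε * (W^(p^k))^2 * ((y-1)^d)^(p^k) := by
          rw [hvW, mul_pow, mul_pow, hεφ, ← pow_mul, mul_comm 2 (p^k), pow_mul]
        have hw : y + 1 = ε * (W * W^(p^k)) * (y - 1) := by
          have hwz : (y+1)/(y-1) ≠ 0 := div_ne_zero hy2' hy1'
          have hwd : ((y+1)/(y-1))^d = ε * W^2 := by rw [div_pow]; exact hTW
          have hwval : (y+1)/(y-1) = ε * (W^d')^2 := by
            have h1 := hzdd' _ hwz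
            rw [hwd] at h1
            rw [← h1, mul_pow, hεd', ← pow_mul, ← pow_mul, mul_comm 2 d']
          have he2' : 2 * ((p^k+1)/2) = p^k + 1 := by
            have := Nat.odd_iff.mp hoddpk; omega
          have hWe : W * W^(p^k) = (W^((p^k+1)/2))^2 := by
            rw [← pow_mul, mul_comm ((p^k+1)/2) 2, he2', pow_succ, mul_comm]
          have h1 : (y+1)^2 = (W*W^(p^k))^2 * (y-1)^2 := by
            calc (y+1)^2 = (y+1)^d * ((y+1)^d)^(p^k) := e3.symm
            _ = (ε*W^2*(y-1)^d) * (ε*(W^(p^k))^2*((y-1)^d)^(p^k)) := by rw [← hvW, ← hφvW]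
            _ = ε^2 * (W*W^(p^k))^2 * ((y-1)^d * ((y-1)^d)^(p^k)) := by ring
            _ = (W*W^(p^k))^2 * (y-1)^2 := by rw [hε2, e2]; ring
          have hwsq : ((y+1)/(y-1))^2 = (W * W^(p^k))^2 := by
            rw [div_pow, h1, mul_div_assoc, div_self (pow_ne_zero 2 hy1'), mul_one]
          have hfac : ((y+1)/(y-1) - W*W^(p^k)) * ((y+1)/(y-1) + W*W^(p^k)) = 0 := by
            linear_combination hwsq
          have hWd'0 : (W^d' : F) ≠ 0 := pow_ne_zero _ hW0
          rcases mul_eq_zero.mp hfac with h0 | h0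
          · have hww : (y+1)/(y-1) = W * W^(p^k) := by linear_combination h0
            rcases hεor with rfl | rfl
            · rw [div_eq_iff hy1'] at hww; rw [hww]; ring
            · exfalso
              have hcon : (W^((p^k+1)/2))^2 = -((W^d')^2) := by
                rw [← hWe, ← hww, hwval]; ring
              exact hns _ _ hWd'0 hcon
          · have hww : (y+1)/(y-1) = -(W * W^(p^k)) := by linear_combination h0
            rcases hεor with rfl | rfl
            · exfalso
              have hcon : (W^((p^k+1)/2))^2 = -((W^d')^2) := by
                rw [← hWe]
                have hq : W * W^(p^k) = -((y+1)/(y-1)) := by linear_combination hww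
                rw [hq, hwval]; ring
              exact hns _ _ hWd'0 hcon
            · rw [div_eq_iff hy1'] at hww; rw [hww]; ring
        have hI1 : ((y-1)^d)^2*(y+1)^2 + ((y+1)^d)^2*(y-1)^2
            + (2*y^2+2-4*g1)*((y-1)^d*(y+1)^d) = 0 := by
          have hg4' : 4*g1 = ((y+1)^d + (y-1)^d) * (((y+1)^d)^(p^k) + ((y-1)^d)^(p^k)) := by
            rw [hg4, ← e4, hyeq]
          linear_combination (-((y-1)^d*(y+1)^d))*hg4' - ((y-1)^d*(y+1)^d + ((y+1)^d)^2)*e2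
            - ((y-1)^d*(y+1)^d + ((y-1)^d)^2)*e3
        have hcan : (((y-1)^d)^2 * W^2) *
            ((y-1)^2*(((W^(p^k))^2+ε)*(1+ε*W^2)) - 4*ε*g1) = 0 := by
          rcases hεor with rfl | rfl
          · linear_combination hI1
              - ((y-1)^2*((y+1)^d + W^2*(y-1)^d) + (2*y^2+2-4*g1)*(y-1)^d)*hvW
              - ((y-1)^d)^2*(1+W^2)*((y+1) + W*W^(p^k)*(y-1))*hw
          · linear_combination hI1
              - ((y-1)^2*((y+1)^d - W^2*(y-1)^d) + (2*y^2+2-4*g1)*(y-1)^d)*hvW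
              - ((y-1)^d)^2*(1-W^2)*((y+1) - W*W^(p^k)*(y-1))*hw
        have hI2 : (y-1)^2*(((W^(p^k))^2+ε)*(1+ε*W^2)) = 4*ε*g1 := by
          have h0 := (mul_eq_zero.mp hcan).resolve_left
            (mul_ne_zero (pow_ne_zero 2 hu0) (pow_ne_zero 2 hW0))
          linear_combination h0
        have h82 : (y-1)*(ε*(W*W^(p^k)) - 1) = 2 := by linear_combination -hw
        have hQ : ((W^(p^k))^2+ε)*(1+ε*W^2) = ε*g1*(ε*(W*W^(p^k)) - 1)^2 := by
          have h4 : ((y-1)*(ε*(W*W^(p^k))-1))^2 = 4 := by rw [h82]; norm_num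
          have h5 : 4*(((W^(p^k))^2+ε)*(1+ε*W^2)) = 4*(ε*g1*(ε*(W*W^(p^k)) - 1)^2) := by
            linear_combination (ε*(W*W^(p^k))-1)^2 * hI2 - ((W^(p^k))^2+ε)*(1+ε*W^2)*h4
          exact mul_left_cancel₀ h4F h5
        have hQt : (W^(p^k))^2*(1-ε*(g1-1)*W^2) + 2*g1*W*(W^(p^k)) + W^2 - ε*(g1-1) = 0 := by
          rcases hεor with rfl|rfl <;> linear_combination hQ
        have hDn : W^2 + ε ≠ 0 := by
          rcases hεor with rfl | rfl
          · intro h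
            exact hns W 1 one_ne_zero (by linear_combination h)
          · intro h
            have hW2 : W^2 = 1 := by linear_combination h
            apply hs
            rw [← hyeq, hvW, hW2]; ring
        set ρ := ((1-ε*(g1-1)*W^2)*(W^(p^k)) + g1*W)/(W^2+ε) with hρdef
        have hρnum : ((1-ε*(g1-1)*W^2)*(W^(p^k)) + g1*W)^2 = ε*(g1-1)*(W^2+ε)^2 := by
          rcases hεor with rfl|rfl
          · linear_combination (1-(g1-1)*W^2)*hQt
          · linear_combination (1+(g1-1)*W^2)*hQt
        have hρ2 : ρ^2 = ε*(g1-1) := by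
          rw [hρdef, div_pow, hρnum, mul_div_assoc, div_self (pow_ne_zero 2 hDn), mul_one]
        have hfact2 : ((1+ε*ρ*W)*(W^(p^k)) - (ρ-W)) * ((1-ε*ρ*W)*(W^(p^k)) + (ρ+W)) = 0 := by
          rcases hεor with rfl|rfl
          · linear_combination hQt + (-(W^2*(W^(p^k))^2) + 2*W*(W^(p^k)) - 1)*hρ2
          · linear_combination hQt + (-(W^2*(W^(p^k))^2) - 2*W*(W^(p^k)) - 1)*hρ2
        rcases mul_eq_zero.mp hfact2 with h0 | h0
        · exact ⟨ε, W, ρ, hεor, hW0, hw, hρ2, by linear_combination h0⟩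
        · refine ⟨ε, -W, ρ, hεor, neg_ne_zero.mpr hW0, ?_, hρ2, ?_⟩
          · rw [hnegpk]
            linear_combination hw
          · rw [hnegpk]
            linear_combination -h0
      -- degenerate-value lemma
      have hκ0 : ∀ y : F, y ≠ 1 → y ≠ -1 → (y+1)^d + (y-1)^d = s → g1 - 1 ≠ 0 := by
        intro y h1 h2 he hk
        obtain ⟨ε, W, ρ, hεor, hW0, hww, hρ2, heq⟩ := hM y h1 h2 he
        rw [hk, mul_zero] at hρ2
        have hρ0 : ρ = 0 := pow_eq_zero_iff two_ne_zero |>.mp hρ2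
        rw [hρ0] at heq
        have hXW : W^(p^k) = -W := by linear_combination heq
        exact hW0 (hK4 W hXW)
      -- the combination lemma
      have comb : ∀ (ε W₁ ρ W₂ : F), (ε = 1 ∨ ε = -1) → W₁ ≠ 0 → W₂ ≠ 0 →
          (y₁+1) = ε * (W₁ * W₁^(p^k)) * (y₁-1) →
          (y₂+1) = ε * (W₂ * W₂^(p^k)) * (y₂-1) →
          ε * ρ^2 = g1 - 1 →
          W₁^(p^k) * (1 + ε*ρ*W₁) = ρ - W₁ → W₂^(p^k) * (1 + ε*ρ*W₂) = ρ - W₂ →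
          y₁ = y₂ := by
        intro ε W₁ ρ W₂ hεor hW₁ hW₂ hw₁ hw₂ hg1ρ heq₁ heq₂
        have hε2 : ε^2 = 1 := by rcases hεor with rfl|rfl <;> norm_num
        have hεφ : ε^(p^k) = ε := by
          rcases hεor with rfl|rfl
          · exact one_pow _
          · exact hoddpk.neg_one_pow
        by_cases hWW : 1 + ε*W₁*W₂ = 0
        · exfalso
          have hXX : 1 + ε*(W₁^(p^k))*(W₂^(p^k)) = 0 := by
            have h1 := congrArg (· ^ (p^k)) hWW
            rw [hphiadd, one_pow, mul_pow, mul_pow, hεφ] at h1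
            rw [zero_pow hoddpk.pos.ne'] at h1
            exact h1
          have h1 : ε*W₁*W₂ = -1 := by linear_combination hWW
          have h2 : ε*(W₁^(p^k))*(W₂^(p^k)) = -1 := by linear_combination hXX
          have hprod : (W₁*W₁^(p^k))*(W₂*W₂^(p^k)) = 1 := by
            rcases hεor with rfl|rfl
            · linear_combination (W₁^(p^k)*W₂^(p^k))*h1 - h2
            · linear_combination (-(W₁^(p^k)*W₂^(p^k)))*h1 - h2
          have hmul : (y₁+1)*(y₂+1) = (y₁-1)*(y₂-1) := by
            calc (y₁+1)*(y₂+1)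
                = (ε^2*((W₁*W₁^(p^k))*(W₂*W₂^(p^k))))*((y₁-1)*(y₂-1)) := by
                  rw [hw₁, hw₂]; ring
            _ = (y₁-1)*(y₂-1) := by rw [hε2, hprod]; ring
          have h2y : (2:F)*(y₁+y₂) = 0 := by linear_combination hmul
          have hy12 : y₂ = -y₁ := by
            have h3 := (mul_eq_zero.mp h2y).resolve_left h2F
            linear_combination h3
          apply hs
          have hss : s = -s := by
            calc s = (y₂+1)^d + (y₂-1)^d := he₂.symm
            _ = (-(y₁-1))^d + (-(y₁+1))^d := by
                  rw [hy12]
                  rw [show -y₁+1 = -(y₁-1) by ring, show -y₁-1 = -(y₁+1) by ring]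
            _ = -((y₁-1)^d + (y₁+1)^d) := by rw [hnegd, hnegd]; ring
            _ = -s := by rw [← he₁]; ring
          have h2s : (2:F)*s = 0 := by linear_combination hss
          exact (mul_eq_zero.mp h2s).resolve_left h2F
        · have hden₁ : 1 + ε*ρ*W₁ ≠ 0 := by
            intro h0
            have hρW : ρ = W₁ := by
              have h1 := heq₁; rw [h0, mul_zero] at h1; linear_combination -h1
            apply hg10
            linear_combination h0 - hg1ρ + (ε*ρ)*hρW
          have hden₂ : 1 + ε*ρ*W₂ ≠ 0 := by
            intro h0
            have hρW : ρ = W₂ := by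
              have h1 := heq₂; rw [h0, mul_zero] at h1; linear_combination -h1
            apply hg10
            linear_combination h0 - hg1ρ + (ε*ρ)*hρW
          have hD0 : (1+ε*ρ*W₁)*(1+ε*ρ*W₂) ≠ 0 := mul_ne_zero hden₁ hden₂
          have hkey1 : (W₁^(p^k) - W₂^(p^k))*((1+ε*ρ*W₁)*(1+ε*ρ*W₂)) = g1*(W₂-W₁) := by
            linear_combination (1+ε*ρ*W₂)*heq₁ - (1+ε*ρ*W₁)*heq₂ + (W₂-W₁)*hg1ρ
          have hkey2 : (1 + ε*(W₁^(p^k))*(W₂^(p^k)))*((1+ε*ρ*W₁)*(1+ε*ρ*W₂))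
              = g1*(1+ε*W₁*W₂) := by
            linear_combination (ε*(W₂^(p^k))*(1+ε*ρ*W₂))*heq₁ + (ε*(ρ-W₁))*heq₂
              + (1+ε*W₁*W₂)*hg1ρ
          have hXX0 : 1 + ε*(W₁^(p^k))*(W₂^(p^k)) ≠ 0 := by
            intro h0
            rw [h0, zero_mul] at hkey2
            exact (mul_ne_zero hg10 hWW) hkey2.symm
          have hcross : (W₁^(p^k) - W₂^(p^k))*(1+ε*W₁*W₂)
              = -((W₁-W₂)*(1 + ε*(W₁^(p^k))*(W₂^(p^k)))) := by
            apply mul_right_cancel₀ hD0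
            linear_combination (1+ε*W₁*W₂)*hkey1 + (W₁-W₂)*hkey2
          have hdenpow : (1+ε*W₁*W₂)^(p^k) = 1 + ε*(W₁^(p^k))*(W₂^(p^k)) := by
            rw [hphiadd, one_pow, mul_pow, mul_pow, hεφ]
          have hφV : ((W₁-W₂)/(1+ε*W₁*W₂))^(p^k) = -((W₁-W₂)/(1+ε*W₁*W₂)) := by
            rw [div_pow, hphisub, hdenpow, ← neg_div, div_eq_div_iff hXX0 hWW]
            linear_combination hcross
          have hV0 := hK4 _ hφV
          have hW12 : W₁ = W₂ := by
            rcases div_eq_zero_iff.mp hV0 with h|h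
            · linear_combination h
            · exact absurd h hWW
          rw [hW12] at hw₁
          have hmul : (y₁+1)*(y₂-1) = (y₂+1)*(y₁-1) := by rw [hw₁, hw₂]; ring
          have h2y : (2:F)*(y₂-y₁) = 0 := by linear_combination hmul
          have h3 := (mul_eq_zero.mp h2y).resolve_left h2F
          linear_combination -h3
      -- case analysis on degenerate points
      by_cases h11 : y₁ = 1
      · subst h11
        by_cases h21 : y₂ = 1
        · exact h21.symm
        by_cases h22 : y₂ = -1
        · exfalso; subst h22
          have hA : s = (2:F)^d := by rw [← he₁]; norm_num [zero_pow hd.pos.ne']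
          have hB : s = -((2:F)^d) := by
            rw [← he₂, show (-1:F)+1 = 0 by ring, show (-1:F)-1 = -2 by ring,
              zero_pow hd.pos.ne', hnegd]; ring
          have hBC : (2:F)*(2:F)^d = 0 := by linear_combination hB - hA
          exact pow_ne_zero d h2F ((mul_eq_zero.mp hBC).resolve_left h2F)
        · exfalso
          apply hκ0 y₂ h21 h22 he₂
          have hA : s = (2:F)^d := by rw [← he₁]; norm_num [zero_pow hd.pos.ne']
          have h4eq : s * s^(p^k) = 4 := by rw [hA, hK2 2 h2F]; norm_num
          rw [hgdef, h4eq, div_self h4F, sub_self]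
      by_cases h12 : y₁ = -1
      · subst h12
        by_cases h21 : y₂ = 1
        · exfalso; subst h21
          have hA : s = (2:F)^d := by rw [← he₂]; norm_num [zero_pow hd.pos.ne']
          have hB : s = -((2:F)^d) := by
            rw [← he₁, show (-1:F)+1 = 0 by ring, show (-1:F)-1 = -2 by ring,
              zero_pow hd.pos.ne', hnegd]; ring
          have hBC : (2:F)*(2:F)^d = 0 := by linear_combination hB - hA
          exact pow_ne_zero d h2F ((mul_eq_zero.mp hBC).resolve_left h2F)
        by_cases h22 : y₂ = -1
        · exact h22.symm
        · exfalso
          apply hκ0 y₂ h21 h22 he₂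
          have hA : s = -((2:F)^d) := by
            rw [← he₁, show (-1:F)+1 = 0 by ring, show (-1:F)-1 = -2 by ring,
              zero_pow hd.pos.ne', hnegd]; ring
          have h4eq : s * s^(p^k) = 4 := by
            rw [hA, hnegpk]
            linear_combination hK2 2 h2F
          rw [hgdef, h4eq, div_self h4F, sub_self]
      by_cases h21 : y₂ = 1
      · exfalso; subst h21
        apply hκ0 y₁ h11 h12 he₁
        have hA : s = (2:F)^d := by rw [← he₂]; norm_num [zero_pow hd.pos.ne']
        have h4eq : s * s^(p^k) = 4 := by rw [hA, hK2 2 h2F]; norm_num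
        rw [hgdef, h4eq, div_self h4F, sub_self]
      by_cases h22 : y₂ = -1
      · exfalso; subst h22
        apply hκ0 y₁ h11 h12 he₁
        have hA : s = -((2:F)^d) := by
          rw [← he₂, show (-1:F)+1 = 0 by ring, show (-1:F)-1 = -2 by ring,
            zero_pow hd.pos.ne', hnegd]; ring
        have h4eq : s * s^(p^k) = 4 := by
          rw [hA, hnegpk]
          linear_combination hK2 2 h2F
        rw [hgdef, h4eq, div_self h4F, sub_self]
      -- both nondegenerate
      have hκ := hκ0 y₁ h11 h12 he₁
      obtain ⟨ε₁, W₁, ρ₁, hor₁, hW₁0, hw₁, hρ₁, heq₁⟩ := hM y₁ h11 h12 he₁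
      obtain ⟨ε₂, W₂, ρ₂, hor₂, hW₂0, hw₂, hρ₂, heq₂⟩ := hM y₂ h21 h22 he₂
      have hcontra : ∀ ρa ρb : F, ρa^2 = 1*(g1-1) → ρb^2 = -1*(g1-1) → False := by
        intro ρa ρb hra hrb
        have hρa0 : ρa ≠ 0 := by
          intro h; apply hκ; rw [h] at hra; linear_combination -hra
        exact hns ρb ρa hρa0 (by linear_combination hrb + hra)
      rcases hor₁ with rfl|rfl <;> rcases hor₂ with rfl|rfl
      · have hsq : (ρ₂ - ρ₁)*(ρ₂ + ρ₁) = 0 := by linear_combination hρ₂ - hρ₁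
        rcases mul_eq_zero.mp hsq with h|h
        · have hr : ρ₂ = ρ₁ := by linear_combination h
          rw [hr] at heq₂
          exact comb 1 W₁ ρ₁ W₂ (Or.inl rfl) hW₁0 hW₂0 hw₁ hw₂
            (by linear_combination hρ₁) heq₁ heq₂
        · have hr : ρ₂ = -ρ₁ := eq_neg_of_add_eq_zero_left h
          rw [hr] at heq₂
          refine comb 1 W₁ ρ₁ (-W₂) (Or.inl rfl) hW₁0 (neg_ne_zero.mpr hW₂0) hw₁ ?_
            (by linear_combination hρ₁) heq₁ ?_
          · rw [hnegpk]; linear_combination hw₂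
          · rw [hnegpk]; linear_combination -heq₂
      · exact (hcontra ρ₁ ρ₂ hρ₁ hρ₂).elim
      · exact (hcontra ρ₂ ρ₁ hρ₂ hρ₁).elim
      · have hsq : (ρ₂ - ρ₁)*(ρ₂ + ρ₁) = 0 := by linear_combination hρ₂ - hρ₁
        rcases mul_eq_zero.mp hsq with h|h
        · have hr : ρ₂ = ρ₁ := by linear_combination h
          rw [hr] at heq₂
          exact comb (-1) W₁ ρ₁ W₂ (Or.inr rfl) hW₁0 hW₂0 hw₁ hw₂
            (by linear_combination -hρ₁) heq₁ heq₂
        · have hr : ρ₂ = -ρ₁ := eq_neg_of_add_eq_zero_left h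
          rw [hr] at heq₂
          refine comb (-1) W₁ ρ₁ (-W₂) (Or.inr rfl) hW₁0 (neg_ne_zero.mpr hW₂0) hw₁ ?_
            (by linear_combination -hρ₁) heq₁ ?_
          · rw [hnegpk]; linear_combination hw₂
          · rw [hnegpk]; linear_combination -heq₂
  -- FINAL ASSEMBLY
  intro a b
  by_cases ha : a = 0
  · subst ha
    have hbij : Function.Bijective (fun x : F => (x+0)^d + x^d) := by
      apply Finite.injective_iff_bijective.mp
      intro x₁ x₂ h12
      simp only [add_zero] at h12
      apply hinjd
      have h2 : (2:F)*(x₁^d) = 2*(x₂^d) := by linear_combination h12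
      exact mul_left_cancel₀ h2F h2
    exact hbij.existsUnique b
  · have hbij : Function.Bijective (fun x : F => (x+a)^d + x^d) := by
      apply Finite.injective_iff_bijective.mp
      intro x₁ x₂ h12
      simp only at h12
      have key : ∀ x : F, (x+a)^d + x^d
          = (a/2)^d * (((2*x/a + 1)+1)^d + ((2*x/a+1)-1)^d) := by
        intro x
        have h1 : (a/2)*((2*x/a+1)+1) = x + a := by field_simp; ring
        have h2 : (a/2)*((2*x/a+1)-1) = x := by field_simp; ring
        calc (x+a)^d + x^d
            = ((a/2)*((2*x/a+1)+1))^d + ((a/2)*((2*x/a+1)-1))^d := by rw [h1, h2]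
        _ = (a/2)^d * (((2*x/a+1)+1)^d + ((2*x/a+1)-1)^d) := by
              rw [mul_pow, mul_pow]; ring
      rw [key x₁, key x₂] at h12
      have ha2 : ((a/2:F))^d ≠ 0 := pow_ne_zero _ (div_ne_zero ha h2F)
      have h12' := mul_left_cancel₀ ha2 h12
      have h13 := hinj _ _ h12'
      have h15 : (2*x₁/a : F) = 2*x₂/a := by linear_combination h13
      rw [div_eq_div_iff ha ha] at h15
      have h14 := mul_right_cancel₀ ha h15
      exact mul_left_cancel₀ h2F h14
    exact hbij.existsUnique b
end

section
/- Let p be an odd prime with p^m ≡ 1 (mod 4), let m and k be positive integers with v_2(k) = v_2(m), and let d be a positive integer with d·(p^k+1)/2 ≡ (p^m+1)/2 (mod p^m - 1). Then F(x) = x^d is PcN over GF(p^m) with c = -1, i.e., for all a, b ∈ GF(p^m) the equation (x+a)^d + x^d = b has exactly one solution x. -/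
open Polynomial

/-- If `v₂ k = v₂ m` then `2 * gcd k m ∣ m + k`. -/
lemma aux_two_gcd_dvd {m k : ℕ} (hm : m ≠ 0) (hk : k ≠ 0)
    (hv : padicValNat 2 k = padicValNat 2 m) : 2 * Nat.gcd k m ∣ m + k := by
  haveI : Fact (Nat.Prime 2) := ⟨Nat.prime_two⟩
  obtain ⟨a, hvm, hvk⟩ : ∃ a, padicValNat 2 m = a ∧ padicValNat 2 k = a := ⟨_, rfl, hv⟩
  have hmd : (2:ℕ) ^ a ∣ m := hvm ▸ pow_padicValNat_dvd
  have hkd : (2:ℕ) ^ a ∣ k := hvk ▸ pow_padicValNat_dvd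
  have hmnd : ¬ ((2:ℕ) ^ (a+1) ∣ m) := by
    rw [← hvm]; exact pow_succ_padicValNat_not_dvd hm
  have hknd : ¬ ((2:ℕ) ^ (a+1) ∣ k) := by
    rw [← hvk]; exact pow_succ_padicValNat_not_dvd hk
  obtain ⟨m₀, hm₀⟩ := hmd
  obtain ⟨k₀, hk₀⟩ := hkd
  have hm₀odd : ¬ (2 ∣ m₀) := by
    rintro ⟨c, hc⟩
    exact hmnd ⟨c, by rw [hm₀, hc]; ring⟩
  have hk₀odd : ¬ (2 ∣ k₀) := by
    rintro ⟨c, hc⟩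
    exact hknd ⟨c, by rw [hk₀, hc]; ring⟩
  have hgcd : Nat.gcd k m = 2 ^ a * Nat.gcd k₀ m₀ := by
    rw [hm₀, hk₀, Nat.gcd_mul_left]
  have hsum : m + k = 2 ^ a * (m₀ + k₀) := by rw [hm₀, hk₀]; ring
  rw [hgcd, hsum]
  have h2 : (2:ℕ) ∣ m₀ + k₀ := by omega
  have hg0 : Nat.gcd k₀ m₀ ∣ m₀ + k₀ :=
    Nat.dvd_add (Nat.gcd_dvd_right _ _) (Nat.gcd_dvd_left _ _)
  have hcop : Nat.Coprime 2 (Nat.gcd k₀ m₀) := by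
    rw [Nat.prime_two.coprime_iff_not_dvd]
    intro h
    exact hk₀odd (h.trans (Nat.gcd_dvd_left _ _))
  have hdvd : 2 * Nat.gcd k₀ m₀ ∣ m₀ + k₀ := hcop.mul_dvd_of_dvd_of_dvd h2 hg0
  calc 2 * (2 ^ a * Nat.gcd k₀ m₀)
      = 2 ^ a * (2 * Nat.gcd k₀ m₀) := by ring
    _ ∣ 2 ^ a * (m₀ + k₀) := mul_dvd_mul_left _ hdvd

/-- `p^j % 4` alternates when `p % 4 = 3`. -/
lemma aux_three_pow_mod4 {p : ℕ} (hp : p % 4 = 3) (j : ℕ) :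
    p ^ j % 4 = if j % 2 = 0 then 1 else 3 := by
  induction j with
  | zero => simp
  | succ n ih =>
    rw [pow_succ, Nat.mul_mod, ih, hp]
    rcases Nat.even_or_odd n with h | h
    · have h0 : n % 2 = 0 := Nat.even_iff.mp h
      rw [if_pos h0, if_neg (by omega)]
    · have h0 : n % 2 = 1 := Nat.odd_iff.mp h
      rw [if_neg (by omega), if_pos (by omega)]

/-- Under the hypotheses, `p^k ≡ 1 (mod 4)`. -/
lemma aux_pk_mod4 {p m k : ℕ} (hodd : Odd p) (hm : 0 < m) (hk : 0 < k)
    (h1m : p ^ m % 4 = 1) (hv : padicValNat 2 k = padicValNat 2 m) : p ^ k % 4 = 1 := by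
  haveI : Fact (Nat.Prime 2) := ⟨Nat.prime_two⟩
  have hp2 : p % 2 = 1 := Nat.odd_iff.mp hodd
  have hmod : p % 4 % 2 = p % 2 := Nat.mod_mod_of_dvd p (by norm_num)
  have h4 : p % 4 = 1 ∨ p % 4 = 3 := by omega
  rcases h4 with h4 | h4
  · rw [Nat.pow_mod, h4, one_pow]; norm_num
  · have hmm := aux_three_pow_mod4 h4 m
    have hkk := aux_three_pow_mod4 h4 k
    rw [h1m] at hmm
    have hmeven : m % 2 = 0 := by by_contra h; rw [if_neg h] at hmm; omega
    have h2k : (2:ℕ) ∣ k := by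
      rw [dvd_iff_padicValNat_ne_zero hk.ne', hv,
        ← dvd_iff_padicValNat_ne_zero hm.ne']
      omega
    rw [hkk, if_pos (by omega)]

/-- The crucial gcd fact: `gcd ((p^m + p^k)/2) ((p^m)^2 - 1) = 1`. -/
lemma aux_gcd_one {p m k : ℕ} (hp : p.Prime) (hm : 0 < m) (hk : 0 < k)
    (hv : padicValNat 2 k = padicValNat 2 m)
    (hpm4 : p ^ m % 4 = 1) (hpk4 : p ^ k % 4 = 1) :
    Nat.gcd ((p ^ m + p ^ k) / 2) ((p ^ m) ^ 2 - 1) = 1 := by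
  by_contra hne
  obtain ⟨l, hl, hldvd⟩ := Nat.exists_prime_and_dvd hne
  have hle : l ∣ (p ^ m + p ^ k) / 2 := hldvd.trans (Nat.gcd_dvd_left _ _)
  have hlq : l ∣ (p ^ m) ^ 2 - 1 := hldvd.trans (Nat.gcd_dvd_right _ _)
  have h2e : 2 * ((p ^ m + p ^ k) / 2) = p ^ m + p ^ k := by omega
  have heodd : (p ^ m + p ^ k) / 2 % 2 = 1 := by omega
  have hl2 : l ≠ 2 := by
    rintro rfl
    obtain ⟨c, hc⟩ := hle
    omega
  haveI : Fact (Nat.Prime l) := ⟨hl⟩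
  set u : ZMod l := (p : ZMod l) with hu
  have hsum : u ^ m + u ^ k = 0 := by
    have h0 : (l:ℕ) ∣ p ^ m + p ^ k := by
      rw [← h2e]; exact Dvd.dvd.mul_left hle 2
    have h1 := (ZMod.natCast_eq_zero_iff _ _).mpr h0
    push_cast at h1
    exact h1
  have hq2 : (u ^ m) ^ 2 = 1 := by
    have h1le : 1 ≤ (p ^ m) ^ 2 := Nat.one_le_pow _ _ (Nat.one_le_pow _ _ hp.pos)
    have h1 := (ZMod.natCast_eq_zero_iff _ _).mpr hlq
    rw [Nat.cast_sub h1le] at h1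
    push_cast at h1
    rw [sub_eq_zero] at h1
    exact h1
  have hmk : u ^ m = - u ^ k := by linear_combination hsum
  have hk2' : (u ^ k) ^ 2 = 1 := by rw [← neg_sq, ← hmk]; exact hq2
  have hk2 : u ^ (2 * k) = 1 := by rw [mul_comm, pow_mul]; exact hk2'
  have hmk1 : u ^ (m + k) = -1 := by
    have h1 : u ^ (m + k) = - (u ^ (2 * k)) := by
      rw [pow_add, hmk, two_mul, pow_add]; ring
    rw [h1, hk2]
  have hdvd1 : orderOf u ∣ 2 * k := orderOf_dvd_of_pow_eq_one hk2
  have hdvd2 : orderOf u ∣ 2 * (m + k) := by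
    apply orderOf_dvd_of_pow_eq_one
    rw [mul_comm, pow_mul, hmk1, neg_one_sq]
  have hdvd3 : orderOf u ∣ 2 * Nat.gcd k m := by
    have := Nat.dvd_gcd hdvd1 hdvd2
    rwa [Nat.gcd_mul_left, Nat.gcd_add_self_right] at this
  have hfin : orderOf u ∣ m + k :=
    hdvd3.trans (aux_two_gcd_dvd hm.ne' hk.ne' hv)
  rw [orderOf_dvd_iff_pow_eq_one, hmk1] at hfin
  have : ((2:ℕ) : ZMod l) = 0 := by push_cast; linear_combination -hfin
  rw [ZMod.natCast_eq_zero_iff] at this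
  exact hl2 ((Nat.prime_dvd_prime_iff_eq hl Nat.prime_two).mp this)

theorem stmt_10 (p m k d : ℕ) (hp : p.Prime) (hodd : Odd p) (hm : 0 < m) (hk : 0 < k)
    (hd0 : 0 < d) (h1m : p ^ m % 4 = 1) (hv : padicValNat 2 k = padicValNat 2 m)
    (hcong : d * ((p ^ k + 1) / 2) ≡ (p ^ m + 1) / 2 [MOD p ^ m - 1])
    (F : Type*) [Field F] [Fintype F] (hcard : Fintype.card F = p ^ m) :
    ∀ a b : F, ∃! x : F, (x + a) ^ d + x ^ d = b := by
  haveI hpfact : Fact p.Prime := ⟨hp⟩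
  have hp3 : 3 ≤ p := by
    have h1 := hp.two_le
    have h2 := Nat.odd_iff.mp hodd
    omega
  have hpk4 : p ^ k % 4 = 1 := aux_pk_mod4 hodd hm hk h1m hv
  have hqp : p ≤ p ^ m := Nat.le_self_pow hm.ne' p
  have hpkpos : 1 ≤ p ^ k := Nat.one_le_pow _ _ hp.pos
  have hq5 : 5 ≤ p ^ m := by omega
  -- the inverse exponent e
  set e : ℕ := (p ^ m + p ^ k) / 2 with hedef
  have h2e : 2 * e = p ^ m + p ^ k := by omega
  have heodd : e % 2 = 1 := by omega
  have hepos : 0 < e := by omega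
  -- d is odd
  have hdodd : d % 2 = 1 := by
    have h4 := hcong.of_dvd (show (2:ℕ) ∣ p ^ m - 1 by omega)
    have h4' : d * ((p ^ k + 1) / 2) % 2 = ((p ^ m + 1) / 2) % 2 := h4
    have h5 : ((p ^ k + 1) / 2) % 2 = 1 := by omega
    have h6 : ((p ^ m + 1) / 2) % 2 = 1 := by omega
    have h7 := Nat.mul_mod d ((p ^ k + 1) / 2) 2
    rw [h5] at h7
    omega
  -- d * e ≡ 1 [MOD p^m - 1]
  have hde : d * e ≡ 1 [MOD p ^ m - 1] := by
    have he0 : 2 * ((p ^ k + 1) / 2) = p ^ k + 1 := by omega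
    have hq0 : 2 * ((p ^ m + 1) / 2) = p ^ m + 1 := by omega
    have h2 := hcong.mul_left' 2
    have e1 : 2 * (d * ((p ^ k + 1) / 2)) = d * (p ^ k + 1) := by
      conv_rhs => rw [← he0]
      ring
    rw [e1, hq0] at h2
    -- h2 : d * (p^k+1) ≡ p^m + 1 [MOD 2*(p^m-1)]
    obtain ⟨c, hc⟩ : ∃ c, d = 2 * c + 1 := ⟨d / 2, by omega⟩
    have h8 : p ^ m - 1 ≡ d * (p ^ m - 1) [MOD 2 * (p ^ m - 1)] := by
      refine (Nat.modEq_iff_dvd' ?_).mpr ⟨c, ?_⟩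
      · exact Nat.le_mul_of_pos_left _ hd0
      · have hh : d * (p ^ m - 1) = 2 * (p ^ m - 1) * c + (p ^ m - 1) := by rw [hc]; ring
        omega
    have hsplit : d * (2 * e) = d * (p ^ m - 1) + d * (p ^ k + 1) := by
      have h9 : 2 * e = (p ^ m - 1) + (p ^ k + 1) := by omega
      rw [h9, mul_add]
    have h10 : d * (2 * e) ≡ (p ^ m - 1) + (p ^ m + 1) [MOD 2 * (p ^ m - 1)] := by
      rw [hsplit]
      exact Nat.ModEq.add h8.symm h2
    have h11 : (p ^ m - 1) + (p ^ m + 1) ≡ 2 * 1 [MOD 2 * (p ^ m - 1)] := by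
      refine ((Nat.modEq_iff_dvd' (by omega)).mpr ⟨1, by omega⟩).symm
    have h12 : 2 * (d * e) ≡ 2 * 1 [MOD 2 * (p ^ m - 1)] := by
      have : d * (2 * e) = 2 * (d * e) := by ring
      rw [← this]
      exact h10.trans h11
    exact Nat.ModEq.mul_left_cancel' (by norm_num) h12
  -- characteristic of F is p
  haveI hcharF : CharP F p := by
    obtain ⟨c, hc⟩ := CharP.exists F
    haveI := hc
    obtain ⟨n, hcprime, hcn⟩ := FiniteField.card F c
    have hpc : p = c := by
      have h1 : p ∣ c ^ (n:ℕ) := by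
        rw [← hcn, hcard]
        exact dvd_pow_self p hm.ne'
      exact (Nat.prime_dvd_prime_iff_eq hp hcprime).mp (hp.dvd_of_dvd_pow h1)
    subst hpc; exact hc
  have hchar2 : (2 : F) ≠ 0 := by
    intro h
    have h2 : ((2:ℕ):F) = 0 := by push_cast; exact h
    have h3 := (CharP.cast_eq_zero_iff F p 2).mp h2
    have := (Nat.prime_dvd_prime_iff_eq hp Nat.prime_two).mp h3
    omega
  -- Fermat-type power identities
  obtain ⟨t, ht⟩ : ∃ t, d * e = (p ^ m - 1) * t + 1 := by
    have h10 : d * e % (p ^ m - 1) = 1 % (p ^ m - 1) := hde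
    have h11 : 1 % (p ^ m - 1) = 1 := Nat.mod_eq_of_lt (by omega)
    refine ⟨d * e / (p ^ m - 1), ?_⟩
    calc d * e = (p ^ m - 1) * (d * e / (p ^ m - 1)) + d * e % (p ^ m - 1) :=
          (Nat.div_add_mod _ _).symm
      _ = (p ^ m - 1) * (d * e / (p ^ m - 1)) + 1 := by rw [h10, h11]
  have hpowFe : ∀ w : F, (w ^ d) ^ e = w := by
    intro w
    rcases eq_or_ne w 0 with rfl | hw
    · rw [zero_pow (by omega : d ≠ 0), zero_pow (by omega : e ≠ 0)]
    · have h13 : w ^ (p ^ m - 1) = 1 := by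
        have h := FiniteField.pow_card_sub_one_eq_one w hw
        rwa [hcard] at h
      rw [← pow_mul, ht, pow_add, pow_mul, h13, one_pow, pow_one, one_mul]
  have hpowEd : ∀ w : F, (w ^ e) ^ d = w := by
    intro w
    rcases eq_or_ne w 0 with rfl | hw
    · rw [zero_pow (by omega : e ≠ 0), zero_pow (by omega : d ≠ 0)]
    · have h13 : w ^ (p ^ m - 1) = 1 := by
        have h := FiniteField.pow_card_sub_one_eq_one w hw
        rwa [hcard] at h
      rw [← pow_mul, mul_comm e d, ht, pow_add, pow_mul, h13, one_pow, pow_one, one_mul]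
  -- quadratic extension K
  have hrchar : ringChar F ≠ 2 := by rw [ringChar.eq F p]; omega
  obtain ⟨r, hr⟩ := FiniteField.exists_nonsquare (F := F) hrchar
  have hirr : Irreducible (X ^ 2 - C r : F[X]) := by
    refine X_pow_sub_C_irreducible_of_prime Nat.prime_two (fun s hs => hr ?_)
    exact ⟨s, by rw [← hs]; ring⟩
  haveI : Fact (Irreducible (X ^ 2 - C r : F[X])) := ⟨hirr⟩
  set K := AdjoinRoot (X ^ 2 - C r : F[X]) with hKdef
  have hfne : (X ^ 2 - C r : F[X]) ≠ 0 := hirr.ne_zero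
  letI : Fintype K := Module.fintypeOfFintype (AdjoinRoot.powerBasis hfne).basis
  have hcardK : Fintype.card K = (p ^ m) ^ 2 := by
    rw [Module.card_fintype (AdjoinRoot.powerBasis hfne).basis, hcard, Fintype.card_fin]
    congr 1
    show (X ^ 2 - C r : F[X]).natDegree = 2
    exact natDegree_X_pow_sub_C
  set φ : F →+* K := algebraMap F K with hφdef
  have hφinj : Function.Injective φ := φ.injective
  haveI hcharK : CharP K p := charP_of_injective_ringHom hφinj p
  have h2K : (2 : K) ≠ 0 := by
    intro h
    have h2 : ((2:ℕ):K) = 0 := by push_cast; exact h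
    have h3 := (CharP.cast_eq_zero_iff K p 2).mp h2
    have := (Nat.prime_dvd_prime_iff_eq hp Nat.prime_two).mp h3
    omega
  -- square roots exist in K
  have hsqrt : ∀ a : F, ∃ s : K, s ^ 2 = φ a := by
    intro a
    by_cases ha : IsSquare a
    · obtain ⟨u, rfl⟩ := ha
      exact ⟨φ u, by rw [map_mul]; ring⟩
    · have ha0 : a ≠ 0 := by rintro rfl; exact ha ⟨0, by ring⟩
      have hr0 : r ≠ 0 := by rintro rfl; exact hr ⟨0, by ring⟩
      have hcrit : ∀ x : F, x ≠ 0 → ¬ IsSquare x → x ^ (Fintype.card F / 2) = -1 := by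
        intro x hx0 hxs
        have h14 := (FiniteField.isSquare_iff hrchar hx0).not.mp hxs
        have h15 : (x ^ (Fintype.card F / 2)) ^ 2 = 1 := by
          rw [← pow_mul]
          have hh : Fintype.card F / 2 * 2 = Fintype.card F - 1 := by rw [hcard]; omega
          rw [hh]
          exact FiniteField.pow_card_sub_one_eq_one x hx0
        have h16 : (x ^ (Fintype.card F / 2) - 1) * (x ^ (Fintype.card F / 2) + 1) = 0 := by
          linear_combination h15
        rcases mul_eq_zero.mp h16 with h | h
        · exact absurd (by linear_combination h) h14
        · linear_combination h
      have has := hcrit a ha0 ha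
      have hrs := hcrit r hr0 hr
      have hsq : IsSquare (a * r⁻¹) := by
        rw [FiniteField.isSquare_iff hrchar (mul_ne_zero ha0 (inv_ne_zero hr0))]
        rw [mul_pow, has, inv_pow, hrs]
        norm_num
      obtain ⟨u, htt⟩ := hsq
      have hart : a = r * (u * u) := by
        field_simp at htt
        linear_combination htt
      have hroot : (AdjoinRoot.root (X ^ 2 - C r : F[X])) ^ 2 = φ r := by
        have h17 := AdjoinRoot.eval₂_root (X ^ 2 - C r : F[X])
        rw [eval₂_sub, eval₂_pow, eval₂_X, eval₂_C, sub_eq_zero] at h17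
        rw [hφdef, AdjoinRoot.algebraMap_eq]
        exact h17
      refine ⟨AdjoinRoot.root _ * φ u, ?_⟩
      rw [mul_pow, hroot, hart, map_mul, map_mul]
      ring
  -- e-th powers of 1 in K
  have hgcd1 := aux_gcd_one hp hm hk hv h1m hpk4
  have hpow1 : ∀ ξ : K, ξ ^ e = 1 → ξ = 1 := by
    intro ξ hξ
    have hξ0 : ξ ≠ 0 := by
      rintro rfl
      rw [zero_pow (by omega : e ≠ 0)] at hξ
      exact zero_ne_one hξ
    have hK1 : ξ ^ ((p ^ m) ^ 2 - 1) = 1 := by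
      have h := FiniteField.pow_card_sub_one_eq_one ξ hξ0
      rwa [hcardK] at h
    have hdvd : orderOf ξ ∣ Nat.gcd ((p ^ m + p ^ k) / 2) ((p ^ m) ^ 2 - 1) :=
      Nat.dvd_gcd (orderOf_dvd_of_pow_eq_one hξ) (orderOf_dvd_of_pow_eq_one hK1)
    rw [hgcd1, Nat.dvd_one] at hdvd
    exact orderOf_eq_one_iff.mp hdvd
  -- the key identity
  have hkey : ∀ (w : F) (ζ : K), ζ ≠ 0 → ζ ^ 2 + 1 = 2 * φ w * ζ →
      φ ((w + 1) ^ e + (w - 1) ^ e) * (2 * ζ) ^ e = 2 * ((ζ ^ e) ^ 2 + 1) := by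
    intro w ζ hζ hquad
    have ha' : (φ w + 1) * (2 * ζ) = (ζ + 1) ^ 2 := by linear_combination -hquad
    have hb' : (φ w - 1) * (2 * ζ) = (ζ - 1) ^ 2 := by linear_combination -hquad
    have hA : ((φ w + 1) * (2 * ζ)) ^ e = (ζ ^ p ^ m + 1) * (ζ ^ p ^ k + 1) := by
      rw [ha', ← pow_mul, show 2 * e = p ^ m + p ^ k from h2e, pow_add,
        add_pow_char_pow, add_pow_char_pow, one_pow, one_pow]
    have hB : ((φ w - 1) * (2 * ζ)) ^ e = (ζ ^ p ^ m - 1) * (ζ ^ p ^ k - 1) := by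
      rw [hb', ← pow_mul, show 2 * e = p ^ m + p ^ k from h2e, pow_add,
        sub_pow_char_pow, sub_pow_char_pow, one_pow, one_pow]
    have hprod : ζ ^ p ^ m * ζ ^ p ^ k = (ζ ^ e) ^ 2 := by
      rw [← pow_add, ← pow_mul]
      congr 1
      omega
    calc φ ((w + 1) ^ e + (w - 1) ^ e) * (2 * ζ) ^ e
        = (φ w + 1) ^ e * (2 * ζ) ^ e + (φ w - 1) ^ e * (2 * ζ) ^ e := by
          rw [map_add, map_pow, map_pow, map_add, map_sub, map_one]
          ring
      _ = ((φ w + 1) * (2 * ζ)) ^ e + ((φ w - 1) * (2 * ζ)) ^ e := by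
          rw [← mul_pow, ← mul_pow]
      _ = (ζ ^ p ^ m + 1) * (ζ ^ p ^ k + 1) + (ζ ^ p ^ m - 1) * (ζ ^ p ^ k - 1) := by
          rw [hA, hB]
      _ = 2 * ((ζ ^ e) ^ 2 + 1) := by linear_combination 2 * hprod
  -- injectivity of z ↦ (z+1)^e + (z-1)^e on F
  have hGinj : ∀ w₁ w₂ : F,
      (w₁ + 1) ^ e + (w₁ - 1) ^ e = (w₂ + 1) ^ e + (w₂ - 1) ^ e → w₁ = w₂ := by
    intro w₁ w₂ hG
    obtain ⟨s₁, hs₁⟩ := hsqrt (w₁ ^ 2 - 1)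
    obtain ⟨s₂, hs₂⟩ := hsqrt (w₂ ^ 2 - 1)
    have hms₁ : s₁ ^ 2 = (φ w₁) ^ 2 - 1 := by rw [hs₁, map_sub, map_pow, map_one]
    have hms₂ : s₂ ^ 2 = (φ w₂) ^ 2 - 1 := by rw [hs₂, map_sub, map_pow, map_one]
    have hquad₁ : (φ w₁ + s₁) ^ 2 + 1 = 2 * φ w₁ * (φ w₁ + s₁) := by linear_combination hms₁
    have hquad₂ : (φ w₂ + s₂) ^ 2 + 1 = 2 * φ w₂ * (φ w₂ + s₂) := by linear_combination hms₂
    have hζ₁0 : φ w₁ + s₁ ≠ 0 := by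
      intro h0; rw [h0] at hquad₁; norm_num at hquad₁
    have hζ₂0 : φ w₂ + s₂ ≠ 0 := by
      intro h0; rw [h0] at hquad₂; norm_num at hquad₂
    have h₁ := hkey w₁ (φ w₁ + s₁) hζ₁0 hquad₁
    have h₂ := hkey w₂ (φ w₂ + s₂) hζ₂0 hquad₂
    rw [hG] at h₁
    set ζ₁ := φ w₁ + s₁
    set ζ₂ := φ w₂ + s₂
    set θ₁ := ζ₁ ^ e with hθ₁def
    set θ₂ := ζ₂ ^ e with hθ₂def
    have hθ₁0 : θ₁ ≠ 0 := pow_ne_zero _ hζ₁0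
    have hθ₂0 : θ₂ ≠ 0 := pow_ne_zero _ hζ₂0
    rw [mul_pow] at h₁ h₂
    -- h₁ : φ C * (2^e * θ₁) = 2*(θ₁^2+1), h₂ : φ C * (2^e * θ₂) = 2*(θ₂^2+1)
    have e3 : 2 * (θ₁ ^ 2 + 1) * θ₂ = 2 * (θ₂ ^ 2 + 1) * θ₁ := by
      rw [← h₁, ← h₂]; ring
    have hfac : (θ₁ - θ₂) * (θ₁ * θ₂ - 1) = 0 := by
      have h2' : (2 : K) * ((θ₁ - θ₂) * (θ₁ * θ₂ - 1)) = 0 := by linear_combination e3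
      rcases mul_eq_zero.mp h2' with h | h
      · exact absurd h h2K
      · exact h
    have hweq : φ w₁ = φ w₂ := by
      rcases mul_eq_zero.mp hfac with h | h
      · -- θ₁ = θ₂
        have hθeq : θ₁ = θ₂ := by linear_combination h
        have hζζ : (ζ₁ * ζ₂⁻¹) ^ e = 1 := by
          rw [mul_pow, inv_pow, ← hθ₁def, ← hθ₂def, hθeq]
          exact mul_inv_cancel₀ hθ₂0
        have hone := hpow1 _ hζζ
        have hζeq : ζ₁ = ζ₂ := by
          rw [mul_inv_eq_one₀ hζ₂0] at hone
          exact hone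
        have hq1' := hquad₁
        rw [hζeq] at hq1'
        -- hq1' : ζ₂^2 + 1 = 2 * φ w₁ * ζ₂
        have heq2 : 2 * φ w₁ * ζ₂ = 2 * φ w₂ * ζ₂ := by
          rw [← hq1', hquad₂]
        have := mul_right_cancel₀ hζ₂0 heq2
        have := mul_left_cancel₀ h2K this
        exact this
      · -- θ₁ * θ₂ = 1
        have hθmul : θ₁ * θ₂ = 1 := by linear_combination h
        have hζζ : (ζ₁ * ζ₂) ^ e = 1 := by
          rw [mul_pow, ← hθ₁def, ← hθ₂def]; exact hθmul
        have hmul1 : ζ₁ * ζ₂ = 1 := hpow1 _ hζζ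
        have hq2' : ζ₁ ^ 2 + 1 = 2 * φ w₂ * ζ₁ := by
          linear_combination ζ₁ ^ 2 * hquad₂ - (1 + ζ₁ * ζ₂ - 2 * φ w₂ * ζ₁) * hmul1
        have heq2 : 2 * φ w₁ * ζ₁ = 2 * φ w₂ * ζ₁ := by
          rw [← hquad₁, hq2']
        have := mul_right_cancel₀ hζ₁0 heq2
        have := mul_left_cancel₀ h2K this
        exact this
    exact hφinj hweq
  -- main statement
  intro a b
  rcases eq_or_ne a 0 with rfl | ha
  · -- equation 2 * x^d = b
    refine ⟨(b * 2⁻¹) ^ e, ?_, ?_⟩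
    · show ((b * 2⁻¹) ^ e + 0) ^ d + ((b * 2⁻¹) ^ e) ^ d = b
      rw [add_zero, hpowEd]
      field_simp
      ring
    · intro y hy
      rw [add_zero] at hy
      have h21 : (2 : F) * y ^ d = b := by linear_combination hy
      have h22 : (2 : F) * (b * 2⁻¹) = b := by
        rw [mul_comm b, mul_inv_cancel_left₀ hchar2]
      have h20 : y ^ d = b * 2⁻¹ := mul_left_cancel₀ hchar2 (h21.trans h22.symm)
      calc y = (y ^ d) ^ e := (hpowFe y).symm
        _ = (b * 2⁻¹) ^ e := by rw [h20]
  · -- a ≠ 0 : injectivity of x ↦ (x+a)^d + x^d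
    have hinj : Function.Injective (fun x : F => (x + a) ^ d + x ^ d) := by
      intro x y hxy
      simp only at hxy
      have had : a ^ d ≠ 0 := pow_ne_zero _ ha
      have hscale : ∀ z : F, (z + a) ^ d + z ^ d = a ^ d * ((z / a + 1) ^ d + (z / a) ^ d) := by
        intro z
        field_simp [ha]
        rw [div_pow, div_pow, mul_add, mul_div_assoc', mul_div_assoc', mul_div_cancel_left₀ _ had, mul_div_cancel_left₀ _ had]
      have hxy2 : (x / a + 1) ^ d + (x / a) ^ d = (y / a + 1) ^ d + (y / a) ^ d := by
        rw [hscale x, hscale y] at hxy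
        exact mul_left_cancel₀ had hxy
      set x' := x / a with hx'def
      set y' := y / a with hy'def
      set b' : F := (x' + 1) ^ d + x' ^ d with hb'def
      have hux : b' - x' ^ d = (x' + 1) ^ d := by rw [hb'def]; ring
      have huy : b' - y' ^ d = (y' + 1) ^ d := by rw [hxy2]; ring
      have hx1 : (b' - x' ^ d) ^ e = (x' ^ d) ^ e + 1 := by
        rw [hux, hpowFe, hpowFe]
      have hy1 : (b' - y' ^ d) ^ e = (y' ^ d) ^ e + 1 := by
        rw [huy, hpowFe, hpowFe]
      have hxy' : x' = y' := by
        rcases eq_or_ne b' 0 with hb0 | hb0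
        · rw [hb0, zero_sub] at hx1 hy1
          have hoe : Odd e := Nat.odd_iff.mpr heodd
          rw [hoe.neg_pow] at hx1 hy1
          have hsame : (2 : F) * (x' ^ d) ^ e = 2 * (y' ^ d) ^ e := by
            linear_combination hy1 - hx1
          have := mul_left_cancel₀ hchar2 hsame
          rwa [hpowFe, hpowFe] at this
        · have hG1 : ∀ u : F, (b' - u) ^ e = u ^ e + 1 →
              ((b' - 2 * u) / b' + 1) ^ e + ((b' - 2 * u) / b' - 1) ^ e = 2 ^ e / b' ^ e := by
            intro u hu
            have hoe : Odd e := Nat.odd_iff.mpr heodd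
            have e1 : (b' - 2 * u) / b' + 1 = 2 * (b' - u) / b' := by
              field_simp [hb0]; ring
            have e2 : (b' - 2 * u) / b' - 1 = -(2 * u) / b' := by
              field_simp [hb0]
              ring
            rw [e1, e2, div_pow, div_pow, ← add_div, hoe.neg_pow,
              mul_pow, mul_pow, hu]
            congr 1
            ring
          have hGx := hG1 _ hx1
          have hGy := hG1 _ hy1
          have hww : (b' - 2 * x' ^ d) / b' = (b' - 2 * y' ^ d) / b' :=
            hGinj _ _ (by rw [hGx, hGy])
          have hud : x' ^ d = y' ^ d := by
            have h22 : b' - 2 * x' ^ d = b' - 2 * y' ^ d := by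
              have := congrArg (fun t => t * b') hww
              simpa [div_mul_cancel₀ _ hb0] using this
            have h23 : (2:F) * x' ^ d = 2 * y' ^ d := by linear_combination - h22
            exact mul_left_cancel₀ hchar2 h23
          calc x' = (x' ^ d) ^ e := (hpowFe x').symm
            _ = (y' ^ d) ^ e := by rw [hud]
            _ = y' := hpowFe y'
      have hfin : x' * a = y' * a := by rw [hxy']
      rwa [hx'def, hy'def, div_mul_cancel₀ _ ha, div_mul_cancel₀ _ ha] at hfin
    obtain ⟨x₀, hx₀⟩ := Finite.injective_iff_surjective.mp hinj b
    refine ⟨x₀, hx₀, fun y hy => hinj ?_⟩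
    show (y + a) ^ d + y ^ d = (x₀ + a) ^ d + x₀ ^ d
    exact hy.trans hx₀.symm
end

section
/- Let p be an odd prime with p^m ≡ 1 (mod 4) and d a positive integer satisfying d·(p^k+1)/2 ≡ (p^m+1)/2 (mod p^m - 1) for some positive integer k. Then gcd(d, p^m - 1) = 1 and d is odd. -/
theorem stmt_11 (p m k d : ℕ) (hp : p.Prime) (hodd : Odd p) (hm : 0 < m) (hk : 0 < k)
    (hd0 : 0 < d) (h1m : p ^ m % 4 = 1)
    (hcong : d * ((p ^ k + 1) / 2) ≡ (p ^ m + 1) / 2 [MOD p ^ m - 1]) :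
    Nat.gcd d (p ^ m - 1) = 1 ∧ Odd d := by
  set t := p ^ m / 4 with ht
  have hdm : p ^ m = 4 * t + 1 := by
    have := Nat.div_add_mod (p ^ m) 4
    omega
  have hN : p ^ m - 1 = 4 * t := by omega
  have hrhs : (p ^ m + 1) / 2 = 2 * t + 1 := by omega
  rw [hN] at hcong
  rw [hrhs] at hcong
  have key : ∀ q, q.Prime → q ∣ d → q ∣ 4 * t → False := by
    intro q hq hqd hqN
    have h2 : d * ((p ^ k + 1) / 2) ≡ 2 * t + 1 [MOD q] := hcong.of_dvd hqN
    have hdvd : q ∣ d * ((p ^ k + 1) / 2) := hqd.mul_right _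
    have hq1 : q ∣ 2 * t + 1 := by
      have h0 : d * ((p ^ k + 1) / 2) ≡ 0 [MOD q] := (Nat.modEq_zero_iff_dvd).2 hdvd
      exact (Nat.modEq_zero_iff_dvd).1 (h0.symm.trans h2).symm
    have hsub : q ∣ 2 * (2 * t + 1) - 4 * t := Nat.dvd_sub (hq1.mul_left 2) hqN
    have h2' : 2 * (2 * t + 1) - 4 * t = 2 := by omega
    rw [h2'] at hsub
    have hq2 : q = 2 := (Nat.prime_dvd_prime_iff_eq hq Nat.prime_two).1 hsub
    subst hq2
    omega
  constructor
  · rw [hN]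
    by_contra h
    obtain ⟨q, hq, hqd, hqN⟩ := Nat.Prime.not_coprime_iff_dvd.1 h
    exact key q hq hqd hqN
  · rw [Nat.odd_iff]
    by_contra h
    exact key 2 Nat.prime_two (by omega) ⟨2 * t, by ring⟩
end

section
/- Let p be an odd prime and m, k positive integers with v_2(m) ≤ v_2(k). Let c ∈ GF(p^{gcd(m,k)}) ⊆ GF(p^m) with c ≠ 1. Then F(x) = x^{p^k+1} is APcN over GF(p^m) with respect to c: for all a, b ∈ GF(p^m), the equation (x+a)^{p^k+1} - c·x^{p^k+1} = b has at most two solutions, and for a = 1 there exists b for which it has exactly two solutions. -/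
/-- If `r` divides `a^n - 1` and `a^m - 1`, then it divides `a^(gcd n m) - 1`. -/
lemma aux_dvd_pow_gcd_sub_one (a n m r : ℕ) (ha : 1 ≤ a)
    (h1 : r ∣ a ^ n - 1) (h2 : r ∣ a ^ m - 1) : r ∣ a ^ Nat.gcd n m - 1 := by
  have key : ∀ j : ℕ, r ∣ a ^ j - 1 → (a : ZMod r) ^ j = 1 := by
    intro j hj
    have h1a : 1 ≤ a ^ j := Nat.one_le_pow _ _ ha
    have h0 : ((a ^ j - 1 : ℕ) : ZMod r) = 0 := (ZMod.natCast_eq_zero_iff _ _).mpr hj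
    rw [Nat.cast_sub h1a] at h0
    push_cast at h0
    linear_combination h0
  have hn := key n h1
  have hm := key m h2
  have hg : (a : ZMod r) ^ Nat.gcd n m = 1 :=
    orderOf_dvd_iff_pow_eq_one.mp
      (Nat.dvd_gcd (orderOf_dvd_of_pow_eq_one hn) (orderOf_dvd_of_pow_eq_one hm))
  have h1g : 1 ≤ a ^ Nat.gcd n m := Nat.one_le_pow _ _ ha
  have h0 : ((a ^ Nat.gcd n m - 1 : ℕ) : ZMod r) = 0 := by
    rw [Nat.cast_sub h1g]
    push_cast
    rw [hg]
    ring
  exact (ZMod.natCast_eq_zero_iff _ _).mp h0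

/-- Under the 2-adic valuation hypothesis, `gcd (2k) m` divides `k`. -/
lemma aux_gcd_two_mul_dvd (k m : ℕ) (hk : 0 < k) (hm : 0 < m)
    (hv : padicValNat 2 m ≤ padicValNat 2 k) : Nat.gcd (2 * k) m ∣ k := by
  set d := Nat.gcd (2 * k) m with hd
  have hd0 : d ≠ 0 := (Nat.gcd_pos_of_pos_right _ hm).ne'
  rw [← Nat.factorization_le_iff_dvd hd0 hk.ne']
  intro ℓ
  by_cases hl : ℓ = 2
  · subst hl
    have hdm : d ∣ m := Nat.gcd_dvd_right _ _
    calc d.factorization 2 ≤ m.factorization 2 :=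
          (Nat.factorization_le_iff_dvd hd0 hm.ne').mpr hdm 2
      _ = padicValNat 2 m := Nat.factorization_def m Nat.prime_two
      _ ≤ padicValNat 2 k := hv
      _ = k.factorization 2 := (Nat.factorization_def k Nat.prime_two).symm
  · have hd2k : d ∣ 2 * k := Nat.gcd_dvd_left _ _
    have h1 : d.factorization ℓ ≤ (2 * k).factorization ℓ :=
      (Nat.factorization_le_iff_dvd hd0 (by positivity)).mpr hd2k ℓ
    rwa [Nat.factorization_mul two_ne_zero hk.ne', Finsupp.add_apply,
      Nat.Prime.factorization Nat.prime_two, Finsupp.single_apply,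
      if_neg fun h => hl h.symm, zero_add] at h1

/-- Key number-theoretic fact: anything dividing both `p^k + 1` and `p^m - 1` divides 2. -/
lemma aux_order_dvd_two (p m k : ℕ) (hp : p.Prime) (hm : 0 < m) (hk : 0 < k)
    (hv : padicValNat 2 m ≤ padicValNat 2 k) (r : ℕ)
    (h1 : r ∣ p ^ k + 1) (h2 : r ∣ p ^ m - 1) : r ∣ 2 := by
  have hp1 : 1 ≤ p := hp.one_lt.le
  have hpk1 : 1 ≤ p ^ k := Nat.one_le_pow _ _ hp.pos
  obtain ⟨b, hb⟩ : ∃ b, p ^ k = b + 1 := ⟨p ^ k - 1, (Nat.sub_add_cancel hpk1).symm⟩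
  have hfac : p ^ (2 * k) - 1 = (p ^ k + 1) * (p ^ k - 1) := by
    have h : p ^ (2 * k) = (p ^ k) * (p ^ k) := by rw [two_mul, pow_add]
    rw [h, hb]
    simp only [Nat.add_sub_cancel]
    exact Nat.sub_eq_of_eq_add (by ring)
  have h2k : r ∣ p ^ (2 * k) - 1 := by
    rw [hfac]
    exact h1.trans ⟨p ^ k - 1, rfl⟩
  have h3 : r ∣ p ^ Nat.gcd (2 * k) m - 1 :=
    aux_dvd_pow_gcd_sub_one p (2 * k) m r hp1 h2k h2
  obtain ⟨s, hs⟩ := aux_gcd_two_mul_dvd k m hk hm hv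
  have h4 : p ^ Nat.gcd (2 * k) m - 1 ∣ p ^ k - 1 := by
    have := Nat.sub_dvd_pow_sub_pow (p ^ Nat.gcd (2 * k) m) 1 s
    rwa [one_pow, ← pow_mul, ← hs] at this
  have h5 : r ∣ p ^ k - 1 := h3.trans h4
  have h6 : r ∣ (p ^ k + 1) - (p ^ k - 1) := Nat.dvd_sub h1 h5
  have h7 : (p ^ k + 1) - (p ^ k - 1) = 2 := by rw [hb]; omega
  rwa [h7] at h6

theorem stmt_12 (p m k : ℕ) (hp : p.Prime) (hodd : Odd p) (hm : 0 < m) (hk : 0 < k)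
    (hv : padicValNat 2 m ≤ padicValNat 2 k)
    (F : Type*) [Field F] [Fintype F] (hcard : Fintype.card F = p ^ m)
    (c : F) (hc1 : c ≠ 1) (hsub : c ^ (p ^ Nat.gcd m k) = c) :
    (∀ a b : F, ({x : F | (x + a) ^ (p ^ k + 1) - c * x ^ (p ^ k + 1) = b}).ncard ≤ 2) ∧
    (∃ b : F, ({x : F | (x + 1) ^ (p ^ k + 1) - c * x ^ (p ^ k + 1) = b}).ncard = 2) := by
  haveI hfp : Fact p.Prime := ⟨hp⟩
  have hn0 : p ^ k + 1 ≠ 0 := by simp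
  -- characteristic of F is p
  have hchar : CharP F p := by
    obtain ⟨q, hq⟩ := CharP.exists F
    haveI := hq
    obtain ⟨n, hq_prime, hcard'⟩ := FiniteField.card F q
    have hpm : p ^ m = q ^ (n : ℕ) := by rw [← hcard, hcard']
    have hdvd : p ∣ q ^ (n : ℕ) := hpm ▸ dvd_pow_self p hm.ne'
    have hpq : p = q := (Nat.prime_dvd_prime_iff_eq hp hq_prime).mp (hp.dvd_of_dvd_pow hdvd)
    rwa [hpq]
  haveI := hchar
  haveI : ExpChar F p := ExpChar.prime hp
  have he : (1 : F) - c ≠ 0 := sub_ne_zero_of_ne (Ne.symm hc1)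
  -- c is fixed by the k-th Frobenius power
  have hck : c ^ (p ^ k) = c := by
    obtain ⟨s, hs⟩ := Nat.gcd_dvd_right m k
    have hfix : ∀ j : ℕ, c ^ (p ^ (Nat.gcd m k * j)) = c := by
      intro j
      induction j with
      | zero => simp
      | succ j ih => rw [Nat.mul_succ, pow_add, pow_mul, ih, hsub]
    rw [hs]
    exact hfix s
  have hec : ((1 : F) - c) ^ (p ^ k) = 1 - c := by
    rw [sub_pow_char_pow, one_pow, hck]
  -- v = ±1 whenever v^(p^k+1) = 1
  have one_or : ∀ v : F, v ^ (p ^ k + 1) = 1 → v = 1 ∨ v = -1 := by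
    intro v hv1
    have hv0 : v ≠ 0 := by
      rintro rfl
      rw [zero_pow hn0] at hv1
      exact zero_ne_one hv1
    have h1 : orderOf v ∣ p ^ k + 1 := orderOf_dvd_of_pow_eq_one hv1
    have h2 : orderOf v ∣ p ^ m - 1 := by
      apply orderOf_dvd_of_pow_eq_one
      rw [← hcard]
      exact FiniteField.pow_card_sub_one_eq_one v hv0
    have h3 : orderOf v ∣ 2 := aux_order_dvd_two p m k hp hm hk hv _ h1 h2
    have hsq : v ^ 2 = 1 := orderOf_dvd_iff_pow_eq_one.mp h3
    have hfact : (v - 1) * (v + 1) = 0 := by linear_combination hsq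
    rcases mul_eq_zero.mp hfact with h | h
    · exact Or.inl (sub_eq_zero.mp h)
    · exact Or.inr (eq_neg_of_add_eq_zero_left h)
  -- membership criterion via completing the square
  have mem_iff : ∀ a b x : F,
      ((x + a) ^ (p ^ k + 1) - c * x ^ (p ^ k + 1) = b) ↔
      ((x + a * (1 - c)⁻¹) ^ (p ^ k + 1) =
        (b - a ^ (p ^ k) * a) * (1 - c)⁻¹ + (a ^ (p ^ k) * (1 - c)⁻¹) * (a * (1 - c)⁻¹)) := by
    intro a b x
    have hα : (a * (1 - c)⁻¹) ^ (p ^ k) = a ^ (p ^ k) * (1 - c)⁻¹ := by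
      rw [mul_pow, inv_pow, hec]
    have key : (x + a) ^ (p ^ k + 1) - c * x ^ (p ^ k + 1) - b =
        (1 - c) * ((x + a * (1 - c)⁻¹) ^ (p ^ k + 1) -
          ((b - a ^ (p ^ k) * a) * (1 - c)⁻¹ + (a ^ (p ^ k) * (1 - c)⁻¹) * (a * (1 - c)⁻¹))) := by
      simp only [pow_succ, add_pow_char_pow, hα]
      field_simp
      ring
    constructor
    · intro h
      have h0 : (1 - c) * ((x + a * (1 - c)⁻¹) ^ (p ^ k + 1) -
          ((b - a ^ (p ^ k) * a) * (1 - c)⁻¹ + (a ^ (p ^ k) * (1 - c)⁻¹) * (a * (1 - c)⁻¹))) = 0 := by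
        rw [← key, h, sub_self]
      rcases mul_eq_zero.mp h0 with h' | h'
      · exact absurd h' he
      · exact sub_eq_zero.mp h'
    · intro h
      have h0 : (x + a) ^ (p ^ k + 1) - c * x ^ (p ^ k + 1) - b = 0 := by
        rw [key, h, sub_self, mul_zero]
      exact sub_eq_zero.mp h0
  constructor
  · -- at most two solutions
    intro a b
    set α := a * (1 - c)⁻¹ with hαdef
    rcases Set.eq_empty_or_nonempty
        {x : F | (x + a) ^ (p ^ k + 1) - c * x ^ (p ^ k + 1) = b} with hS | ⟨x0, hx0⟩
    · rw [hS]; simp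
    · have hx0' := (mem_iff a b x0).mp hx0
      have hsubset : {x : F | (x + a) ^ (p ^ k + 1) - c * x ^ (p ^ k + 1) = b} ⊆
          {x0, -(x0 + α) - α} := by
        intro x hx
        have hx' := (mem_iff a b x).mp hx
        have heq : (x + α) ^ (p ^ k + 1) = (x0 + α) ^ (p ^ k + 1) := by rw [hx', hx0']
        by_cases hu0 : x0 + α = 0
        · have hz : (x + α) ^ (p ^ k + 1) = 0 := by rw [heq, hu0, zero_pow hn0]
          have hxα : x + α = 0 := pow_eq_zero_iff hn0 |>.mp hz
          left
          have : x + α = x0 + α := by rw [hxα, hu0]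
          exact add_right_cancel this
        · have hrat : ((x + α) / (x0 + α)) ^ (p ^ k + 1) = 1 := by
            rw [div_pow, heq, div_self (pow_ne_zero _ hu0)]
          rcases one_or _ hrat with h | h
          · left
            have h2 : x + α = x0 + α := (div_eq_one_iff_eq hu0).mp h
            exact add_right_cancel h2
          · right
            have h2 : x + α = -1 * (x0 + α) := (div_eq_iff hu0).mp h
            show x = -(x0 + α) - α
            linear_combination h2
      calc ({x : F | (x + a) ^ (p ^ k + 1) - c * x ^ (p ^ k + 1) = b}).ncard
          ≤ ({x0, -(x0 + α) - α} : Set F).ncard :=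
            Set.ncard_le_ncard hsubset (Set.toFinite _)
        _ ≤ 2 := by
            apply (Set.ncard_insert_le _ _).trans
            simp
  · -- existence of b with exactly two solutions
    refine ⟨(1 - c) * (1 - ((1 - c)⁻¹ * (1 - c)⁻¹)) + 1, ?_⟩
    have ht1 : ((1 - c) * (1 - ((1 - c)⁻¹ * (1 - c)⁻¹)) + 1 - (1 : F) ^ (p ^ k) * 1) * (1 - c)⁻¹ +
        ((1 : F) ^ (p ^ k) * (1 - c)⁻¹) * (1 * (1 - c)⁻¹) = 1 := by
      field_simp
      ring
    have hSeq : {x : F | (x + 1) ^ (p ^ k + 1) - c * x ^ (p ^ k + 1) =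
        (1 - c) * (1 - ((1 - c)⁻¹ * (1 - c)⁻¹)) + 1} =
        {1 - (1 - c)⁻¹, -1 - (1 - c)⁻¹} := by
      ext x
      rw [Set.mem_setOf_eq, mem_iff 1 _ x, ht1]
      simp only [Set.mem_insert_iff, Set.mem_singleton_iff]
      constructor
      · intro h
        rcases one_or _ h with h' | h'
        · left; linear_combination h'
        · right; linear_combination h'
      · rintro (rfl | rfl)
        · have h2 : (1 : F) - (1 - c)⁻¹ + 1 * (1 - c)⁻¹ = 1 := by ring
          rw [h2, one_pow]
        · have h2 : (-1 : F) - (1 - c)⁻¹ + 1 * (1 - c)⁻¹ = -1 := by ring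
          rw [h2]
          have heven : Even (p ^ k + 1) := (hodd.pow).add_one
          exact heven.neg_one_pow
    rw [hSeq]
    apply Set.ncard_pair
    intro hcontra
    have h20 : (2 : F) = 0 := by linear_combination hcontra
    have hp2 : (p : ℕ) ∣ 2 := by
      have := (CharP.cast_eq_zero_iff F p 2).mp (by exact_mod_cast h20)
      exact this
    have : p = 2 := (Nat.prime_dvd_prime_iff_eq hp Nat.prime_two).mp hp2
    rw [this] at hodd
    exact absurd hodd (by decide)
end

section
/- Let p be an odd prime, m, k positive integers with v_2(m) ≤ v_2(k), and c ∈ GF(p^m) with c ≠ 1 and c^{p^k - 1} = 1. Set a = 1/(1-c). Then for each b ∈ GF(p^m), the number of solutions x ∈ GF(p^m) of (x+1)^{p^k+1} - c·x^{p^k+1} = b equals the number of solutions y of y^{p^k+1} = a^2 - a + a·b, which is 0, 1, or 2 according as a^2 - a + ab is a nonsquare, zero, or a nonzero square in GF(p^m). Consequently the c-differential spectrum of x^{p^k+1} at a = 1 is ω_0 = (p^m-1)/2, ω_1 = 1, ω_2 = (p^m-1)/2. -/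
open scoped Classical


lemma aux_gcd_dvd (k m : ℕ) (hm : 0 < m) (hk : 0 < k)
    (hv : padicValNat 2 m ≤ padicValNat 2 k) : Nat.gcd (2 * k) m ∣ k := by
  set g := Nat.gcd (2 * k) m with hgdef
  have hg0 : g ≠ 0 := Nat.gcd_ne_zero_right hm.ne'
  have hk0 : k ≠ 0 := hk.ne'
  have hm0 : m ≠ 0 := hm.ne'
  have h2 : Nat.Prime 2 := Nat.prime_two
  have hob : ordCompl[2] g ∣ k := by
    have h1 : ordCompl[2] g ∣ 2 * k := (Nat.ordCompl_dvd g 2).trans (Nat.gcd_dvd_left _ _)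
    have hcop : Nat.Coprime (ordCompl[2] g) 2 := (Nat.coprime_ordCompl h2 hg0).symm
    exact hcop.dvd_of_dvd_mul_left h1
  have hpp : ordProj[2] g ∣ k := by
    have h1 : g.factorization 2 ≤ m.factorization 2 :=
      (Nat.factorization_le_iff_dvd hg0 hm0).mpr (Nat.gcd_dvd_right _ _) 2
    have h2' : m.factorization 2 ≤ k.factorization 2 := by
      rw [Nat.factorization_def m h2, Nat.factorization_def k h2]; exact hv
    calc 2 ^ g.factorization 2 ∣ 2 ^ k.factorization 2 := pow_dvd_pow 2 (h1.trans h2')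
      _ ∣ k := Nat.ordProj_dvd k 2
  have hcop2 : Nat.Coprime (ordProj[2] g) (ordCompl[2] g) :=
    (Nat.coprime_ordCompl h2 hg0).pow_left _
  have := hcop2.mul_dvd_of_dvd_of_dvd hpp hob
  rwa [Nat.ordProj_mul_ordCompl_eq_self] at this

lemma frob_mul_fix {F : Type*} [Field F] (p : ℕ) [Fact p.Prime] [CharP F p]
    (z : F) (a : ℕ) (ha : z ^ p ^ a = z) (t : ℕ) : z ^ p ^ (a * t) = z := by
  induction t with
  | zero => simp
  | succ t ih => rw [Nat.mul_succ, pow_add, pow_mul, ih, ha]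

lemma frob_gcd_fix {F : Type*} [Field F] (p : ℕ) [hp : Fact p.Prime] [CharP F p]
    (a b : ℕ) : ∀ z : F, z ^ p ^ a = z → z ^ p ^ b = z → z ^ p ^ Nat.gcd a b = z := by
  induction a, b using Nat.gcd.induction with
  | H0 b => intro z _ hb; simpa using hb
  | H1 a b hpos ih =>
    intro z ha hb
    rw [Nat.gcd_rec]
    refine ih z ?_ ha
    have hinj : ∀ x y : F, x ^ p ^ (a * (b / a)) = y ^ p ^ (a * (b / a)) → x = y := by
      intro x y hxy
      have h0 : (x - y) ^ p ^ (a * (b / a)) = 0 := by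
        rw [sub_pow_char_pow, hxy, sub_self]
      have hne : p ^ (a * (b / a)) ≠ 0 := pow_ne_zero _ hp.out.pos.ne'
      exact sub_eq_zero.mp (pow_eq_zero_iff hne |>.mp h0)
    apply hinj
    rw [← pow_mul, ← pow_add, Nat.mod_add_div, hb, frob_mul_fix p z a ha]


lemma range_card_mul {G : Type*} [Group G] [Fintype G] (f : G →* G) :
    Nat.card f.range * Nat.card f.ker = Nat.card G := by
  rw [Subgroup.card_eq_card_quotient_mul_card_subgroup f.ker,
    Nat.card_congr (QuotientGroup.quotientKerEquivRange f).toEquiv]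

lemma sq_eq_one_cases {F : Type*} [Field F] (x : F) (h : x ^ 2 = 1) : x = 1 ∨ x = -1 := by
  have h2 : (x - 1) * (x + 1) = 0 := by linear_combination h
  rcases mul_eq_zero.mp h2 with h3 | h3
  · exact Or.inl (sub_eq_zero.mp h3)
  · exact Or.inr (eq_neg_of_add_eq_zero_left h3)

lemma squares_aux {F : Type*} [Field F] [Fintype F] (hne : (-1 : F) ≠ 1)
    (d r : ℕ) (hdr : d = r + r)
    (hker : ∀ z : F, z ^ d = 1 → z = 1 ∨ z = -1) :
    (∀ t : F, t ≠ 0 → IsSquare t → ∃ y : F, y ^ d = t) ∧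
    ({t : F | t ≠ 0 ∧ IsSquare t}).ncard = (Fintype.card F - 1) / 2 ∧
    ({t : F | t ≠ 0 ∧ ¬ IsSquare t}).ncard = (Fintype.card F - 1) / 2 := by
  have hne1 : ((-1 : Fˣ) : F) ≠ ((1 : Fˣ) : F) := by simpa using hne
  have hneu : (-1 : Fˣ) ≠ 1 := fun h => hne1 (by rw [h])
  have hdeven : Even d := ⟨r, hdr⟩
  set σ : Fˣ →* Fˣ := powMonoidHom 2 with hσ
  set ψ : Fˣ →* Fˣ := powMonoidHom d with hψ
  -- characterization of kernels
  have hA : ∀ z : Fˣ, z ^ 2 = 1 ↔ (z = 1 ∨ z = -1) := by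
    intro z
    constructor
    · intro h
      have : ((z : F)) ^ 2 = 1 := by
        have := congrArg (Units.val) h; push_cast at this; exact_mod_cast this
      rcases sq_eq_one_cases _ this with h1 | h1
      · left; ext; simpa using h1
      · right; ext; simpa using h1
    · rintro (rfl | rfl) <;> simp
  have hB : ∀ z : Fˣ, z ^ d = 1 ↔ (z = 1 ∨ z = -1) := by
    intro z
    constructor
    · intro h
      have : ((z : F)) ^ d = 1 := by
        have := congrArg (Units.val) h; push_cast at this; exact_mod_cast this
      rcases hker _ this with h1 | h1
      · left; ext; simpa using h1
      · right; ext; simpa using h1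
    · rintro (rfl | rfl)
      · simp
      · simpa using hdeven.neg_one_pow
  have hkereq : ψ.ker = σ.ker := by
    ext z
    simp only [MonoidHom.mem_ker, hσ, hψ, powMonoidHom_apply]
    rw [hB, hA]
  -- kernel as a pair set
  have hkerset : (σ.ker : Set Fˣ) = {1, -1} := by
    ext z
    simp only [SetLike.mem_coe, MonoidHom.mem_ker, hσ, powMonoidHom_apply, Set.mem_insert_iff,
      Set.mem_singleton_iff]
    exact hA z
  have hkercard : Nat.card σ.ker = 2 := by
    rw [← SetLike.coe_sort_coe, Nat.card_coe_set_eq, hkerset]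
    exact Set.ncard_pair (fun h => hneu h.symm)
  -- ranges
  have hrange_le : ψ.range ≤ σ.range := by
    rintro u ⟨y, rfl⟩
    refine ⟨y ^ r, ?_⟩
    simp only [hσ, hψ, powMonoidHom_apply]
    rw [← pow_mul, mul_two, ← hdr]
  have hcards : Nat.card ψ.range = Nat.card σ.range := by
    have h1 := range_card_mul ψ
    have h2 := range_card_mul σ
    rw [hkereq] at h1
    have hk0 : 0 < Nat.card σ.ker := Nat.card_pos
    exact Nat.eq_of_mul_eq_mul_right hk0 (h1.trans h2.symm)
  have hrange_eq : ψ.range = σ.range := by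
    apply SetLike.coe_injective
    apply Set.eq_of_subset_of_ncard_le hrange_le _ (Set.toFinite _)
    rw [← Nat.card_coe_set_eq, ← Nat.card_coe_set_eq, SetLike.coe_sort_coe, SetLike.coe_sort_coe,
      hcards]
  -- the squares set is the image of the range of σ
  have hsqset : {t : F | t ≠ 0 ∧ IsSquare t} = (fun u : Fˣ => (u : F)) '' (σ.range : Set Fˣ) := by
    ext t
    constructor
    · rintro ⟨ht0, s, rfl⟩
      have hs0 : s ≠ 0 := fun h => ht0 (by rw [h, mul_zero])
      refine ⟨Units.mk0 s hs0 ^ 2, ⟨Units.mk0 s hs0, rfl⟩, ?_⟩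
      push_cast
      rw [sq]
      rfl
    · rintro ⟨u, ⟨v, rfl⟩, rfl⟩
      simp only [hσ, powMonoidHom_apply]
      refine ⟨Units.ne_zero _, ⟨(v : F), ?_⟩⟩
      push_cast
      rw [sq]
  have hcardsq : Nat.card σ.range * 2 = Fintype.card F - 1 := by
    have := range_card_mul σ
    rw [hkercard] at this
    rw [this, Nat.card_eq_fintype_card, Fintype.card_units]
  have hsqcard : ({t : F | t ≠ 0 ∧ IsSquare t}).ncard = (Fintype.card F - 1) / 2 := by
    rw [hsqset, Set.ncard_image_of_injective _ Units.val_injective,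
      ← Nat.card_coe_set_eq, SetLike.coe_sort_coe]
    omega
  refine ⟨?_, hsqcard, ?_⟩
  · intro t ht0 htsq
    have : t ∈ (fun u : Fˣ => (u : F)) '' (σ.range : Set Fˣ) := hsqset ▸ ⟨ht0, htsq⟩
    rw [← hrange_eq] at this
    obtain ⟨u, ⟨y, rfl⟩, rfl⟩ := this
    refine ⟨(y : F), ?_⟩
    simp only [hψ, powMonoidHom_apply]
    push_cast
    rfl
  · have hdiff : {t : F | t ≠ 0 ∧ ¬ IsSquare t} =
        ({(0 : F)}ᶜ : Set F) \ {t : F | t ≠ 0 ∧ IsSquare t} := by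
      ext t
      simp only [Set.mem_setOf_eq, Set.mem_diff, Set.mem_compl_iff, Set.mem_singleton_iff]
      tauto
    have hcompl : ({(0 : F)}ᶜ : Set F).ncard = Fintype.card F - 1 := by
      rw [Set.compl_eq_univ_diff, Set.ncard_diff (Set.subset_univ _) (Set.toFinite _),
        Set.ncard_univ, Set.ncard_singleton, Nat.card_eq_fintype_card]
    rw [hdiff, Set.ncard_diff _ (Set.toFinite _), hcompl, hsqcard]
    · omega
    · rintro t ⟨ht0, _⟩
      simpa using ht0

lemma count_fiber {F : Type*} [Field F] [Fintype F] (hne : (-1 : F) ≠ 1)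
    (d r : ℕ) (hdr : d = r + r) (hd0 : d ≠ 0)
    (hker : ∀ z : F, z ^ d = 1 → z = 1 ∨ z = -1) (t : F) :
    ({y : F | y ^ d = t}).ncard = if t = 0 then 1 else if IsSquare t then 2 else 0 := by
  split_ifs with h0 hsq
  · subst h0
    have : {y : F | y ^ d = 0} = {0} := by
      ext y; simp [pow_eq_zero_iff hd0]
    rw [this, Set.ncard_singleton]
  · obtain ⟨y0, hy0⟩ := (squares_aux hne d r hdr hker).1 t h0 hsq
    have hy00 : y0 ≠ 0 := by
      rintro rfl
      exact h0 (by rw [← hy0, zero_pow hd0])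
    have hyne : y0 ≠ -y0 := by
      intro h
      apply hne
      have h2 : (-1 : F) * y0 = 1 * y0 := by rw [neg_one_mul, one_mul, ← h]
      exact mul_right_cancel₀ hy00 h2
    have hset : {y : F | y ^ d = t} = {y0, -y0} := by
      ext y
      simp only [Set.mem_setOf_eq, Set.mem_insert_iff, Set.mem_singleton_iff]
      constructor
      · intro hy
        have hz : (y * y0⁻¹) ^ d = 1 := by
          rw [mul_pow, inv_pow, hy, hy0, mul_inv_cancel₀ h0]
        rcases hker _ hz with h1 | h1
        · left
          field_simp at h1
          exact h1
        · right
          field_simp at h1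
          linear_combination h1
      · rintro (rfl | rfl)
        · exact hy0
        · rw [Even.neg_pow ⟨r, hdr⟩, hy0]
    rw [hset, Set.ncard_pair hyne]
  · have : {y : F | y ^ d = t} = ∅ := by
      ext y
      simp only [Set.mem_setOf_eq, Set.mem_empty_iff_false, iff_false]
      intro hy
      exact hsq ⟨y ^ r, by rw [← hy, hdr, pow_add]⟩
    rw [this, Set.ncard_empty]

theorem stmt_13 (p m k : ℕ) (hp : p.Prime) (hodd : Odd p) (hm : 0 < m) (hk : 0 < k)
    (hv : padicValNat 2 m ≤ padicValNat 2 k)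
    (F : Type*) [Field F] [Fintype F] (hcard : Fintype.card F = p ^ m)
    (c : F) (hc1 : c ≠ 1) (hck : c ^ (p ^ k - 1) = 1)
    (a : F) (ha : a = 1 / (1 - c)) :
    (∀ b : F,
      ({x : F | (x + 1) ^ (p ^ k + 1) - c * x ^ (p ^ k + 1) = b}).ncard =
        ({y : F | y ^ (p ^ k + 1) = a ^ 2 - a + a * b}).ncard ∧
      ({y : F | y ^ (p ^ k + 1) = a ^ 2 - a + a * b}).ncard =
        (if a ^ 2 - a + a * b = 0 then 1
         else if IsSquare (a ^ 2 - a + a * b) then 2 else 0)) ∧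
    ({b : F | ({x : F | (x + 1) ^ (p ^ k + 1) - c * x ^ (p ^ k + 1) = b}).ncard = 0}).ncard
      = (p ^ m - 1) / 2 ∧
    ({b : F | ({x : F | (x + 1) ^ (p ^ k + 1) - c * x ^ (p ^ k + 1) = b}).ncard = 1}).ncard
      = 1 ∧
    ({b : F | ({x : F | (x + 1) ^ (p ^ k + 1) - c * x ^ (p ^ k + 1) = b}).ncard = 2}).ncard
      = (p ^ m - 1) / 2 := by
  haveI : Fact p.Prime := ⟨hp⟩
  have hcp : CharP F p := by
    obtain ⟨q, hq⟩ := CharP.exists F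
    haveI := hq
    obtain ⟨n, hqprime, hcardq⟩ := FiniteField.card F q
    have hqp : q = p := by
      have h1 : q ∣ p ^ m := by
        rw [← hcard, hcardq]
        exact dvd_pow_self q (by exact_mod_cast n.pos.ne')
      exact (Nat.prime_dvd_prime_iff_eq hqprime hp).mp (hqprime.dvd_of_dvd_pow h1)
    rwa [hqp] at hq
  haveI := hcp
  have hp2 : p ≠ 2 := by rintro rfl; exact (by decide : ¬ Odd 2) hodd
  have hcharne : ringChar F ≠ 2 := by rw [ringChar.eq F p]; exact hp2
  have hne : (-1 : F) ≠ 1 := Ring.neg_one_ne_one_of_char_ne_two hcharne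
  have hqk_odd : Odd (p ^ k) := hodd.pow
  set d := p ^ k + 1 with hd
  have hd0 : d ≠ 0 := Nat.succ_ne_zero _
  obtain ⟨r, hr⟩ : Even d := hqk_odd.add_one
  have hpk1 : 1 ≤ p ^ k := Nat.one_le_pow _ _ hp.pos
  have hpk3 : 3 ≤ p ^ k := by
    have h2le := hp.two_le
    have : 3 ≤ p := by omega
    calc 3 ≤ p := this
      _ = p ^ 1 := (pow_one p).symm
      _ ≤ p ^ k := Nat.pow_le_pow_right hp.pos hk
  have hc0 : c ≠ 0 := by
    rintro rfl
    rw [zero_pow (by omega : p ^ k - 1 ≠ 0)] at hck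
    exact zero_ne_one hck
  have hcq : c ^ p ^ k = c := by
    have h2 : p ^ k = (p ^ k - 1) + 1 := by omega
    rw [h2, pow_succ, hck, one_mul]
  have h1c : (1 : F) - c ≠ 0 := fun h => hc1 (by linear_combination -h)
  have ha0 : a ≠ 0 := by rw [ha]; exact one_div_ne_zero h1c
  have ha1 : a * (1 - c) = 1 := by rw [ha]; field_simp
  have haq : a ^ p ^ k = a := by
    have h2 : ((1 : F) - c) ^ p ^ k = 1 - c := by
      rw [sub_pow_char_pow, one_pow, hcq]
    rw [ha, one_div, inv_pow, h2]
  -- the d-th roots of unity are ±1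
  have hker : ∀ z : F, z ^ d = 1 → z = 1 ∨ z = -1 := by
    intro z hz
    have hz0 : z ≠ 0 := by rintro rfl; rw [zero_pow hd0] at hz; exact zero_ne_one hz
    have hzq : z ^ p ^ k = z⁻¹ := by
      have h2 : z ^ p ^ k * z = 1 := by rw [← pow_succ]; exact hz
      exact eq_inv_of_mul_eq_one_left h2
    have h2k : z ^ p ^ (2 * k) = z := by
      rw [two_mul, pow_add, pow_mul, hzq, inv_pow, hzq, inv_inv]
    have hmfix : z ^ p ^ m = z := by rw [← hcard]; exact FiniteField.pow_card z
    have hgcd := frob_gcd_fix p (2 * k) m z h2k hmfix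
    obtain ⟨t, ht⟩ := aux_gcd_dvd k m hm hk hv
    have hkfix : z ^ p ^ k = z := by rw [ht]; exact frob_mul_fix p z _ hgcd t
    have h3 : z⁻¹ = z := by rw [← hzq, hkfix]
    have hz2 : z ^ 2 = 1 := by
      rw [sq]
      nth_rewrite 2 [← h3]
      exact mul_inv_cancel₀ hz0
    exact sq_eq_one_cases z hz2
  -- the key algebraic identity
  have hkey : ∀ x : F, (x + a) ^ d = a ^ 2 - a + a * ((x + 1) ^ d - c * x ^ d) := by
    intro x
    have e1 : (x + a) ^ p ^ k = x ^ p ^ k + a := by rw [add_pow_char_pow, haq]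
    have e2 : (x + 1) ^ p ^ k = x ^ p ^ k + 1 := by rw [add_pow_char_pow, one_pow]
    rw [hd, pow_succ (x + a) (p ^ k), pow_succ (x + 1) (p ^ k), pow_succ x (p ^ k), e1, e2]
    linear_combination (-(x ^ p ^ k * x)) * ha1
  have himg : ∀ b : F, {y : F | y ^ d = a ^ 2 - a + a * b} =
      (fun x : F => x + a) '' {x : F | (x + 1) ^ d - c * x ^ d = b} := by
    intro b
    ext y
    simp only [Set.mem_setOf_eq, Set.mem_image]
    constructor
    · intro hy
      refine ⟨y - a, ?_, by ring⟩
      have h2 := hkey (y - a)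
      rw [show y - a + a = y by ring] at h2
      rw [h2] at hy
      exact mul_left_cancel₀ ha0 (by linear_combination hy)
    · rintro ⟨x, hx, rfl⟩
      rw [hkey x, hx]
  have hcount : ∀ b : F, ({x : F | (x + 1) ^ d - c * x ^ d = b}).ncard =
      ({y : F | y ^ d = a ^ 2 - a + a * b}).ncard := by
    intro b
    rw [himg b, Set.ncard_image_of_injective _ (add_left_injective a)]
  have hN : ∀ b : F, ({x : F | (x + 1) ^ d - c * x ^ d = b}).ncard =
      if a ^ 2 - a + a * b = 0 then 1 else if IsSquare (a ^ 2 - a + a * b) then 2 else 0 := by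
    intro b
    rw [hcount b]
    exact count_fiber hne d r hr hd0 hker _
  obtain ⟨-, hsqc, hnsqc⟩ := squares_aux hne d r hr hker
  rw [hcard] at hsqc hnsqc
  -- the affine bijection t ↦ b
  have hjinj : Function.Injective (fun t : F => (t - a ^ 2 + a) * a⁻¹) := by
    intro t1 t2 h12
    have h3 : t1 - a ^ 2 + a = t2 - a ^ 2 + a := mul_right_cancel₀ (inv_ne_zero ha0) h12
    linear_combination h3
  have hpre : ∀ P : F → Prop, {b : F | P (a ^ 2 - a + a * b)} =
      (fun t : F => (t - a ^ 2 + a) * a⁻¹) '' {t : F | P t} := by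
    intro P
    ext b
    simp only [Set.mem_setOf_eq, Set.mem_image]
    constructor
    · intro hb
      refine ⟨a ^ 2 - a + a * b, hb, ?_⟩
      field_simp
      ring
    · rintro ⟨t, ht, rfl⟩
      have h4 : a ^ 2 - a + a * ((t - a ^ 2 + a) * a⁻¹) = t := by
        field_simp
        ring
      rw [h4]
      exact ht
  have hTzero : ∀ b : F, (a ^ 2 - a + a * b = 0) ↔ b = 1 - a := by
    intro b
    constructor
    · intro h
      exact mul_left_cancel₀ ha0 (by linear_combination h)
    · rintro rfl; ring
  refine ⟨fun b => ⟨hcount b, count_fiber hne d r hr hd0 hker _⟩, ?_, ?_, ?_⟩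
  · have hset0 : {b : F | ({x : F | (x + 1) ^ d - c * x ^ d = b}).ncard = 0} =
        {b : F | (fun t => t ≠ 0 ∧ ¬ IsSquare t) (a ^ 2 - a + a * b)} := by
      ext b
      simp only [Set.mem_setOf_eq]
      rw [hN b]
      split_ifs with h1 h2
      · simp [h1]
      · simp [h1, h2]
      · simp [h1, h2]
    rw [hset0, hpre (fun t => t ≠ 0 ∧ ¬ IsSquare t),
      Set.ncard_image_of_injective _ hjinj, hnsqc]
  · have hset1 : {b : F | ({x : F | (x + 1) ^ d - c * x ^ d = b}).ncard = 1} =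
        {1 - a} := by
      ext b
      simp only [Set.mem_setOf_eq, Set.mem_singleton_iff]
      rw [hN b, ← hTzero b]
      split_ifs with h1 h2
      · simp [h1]
      · simp [h1]
      · simp [h1]
    rw [hset1, Set.ncard_singleton]
  · have hset2 : {b : F | ({x : F | (x + 1) ^ d - c * x ^ d = b}).ncard = 2} =
        {b : F | (fun t => t ≠ 0 ∧ IsSquare t) (a ^ 2 - a + a * b)} := by
      ext b
      simp only [Set.mem_setOf_eq]
      rw [hN b]
      split_ifs with h1 h2
      · simp [h1]
      · simp [h1, h2]
      · simp [h1, h2]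
    rw [hset2, hpre (fun t => t ≠ 0 ∧ IsSquare t),
      Set.ncard_image_of_injective _ hjinj, hsqc]
end

section
/- Let p be an odd prime with p^k ≡ 3 (mod 4) and p^m ≡ 3 (mod 4), and let b ∈ {1, -1} ⊆ GF(p^m). Then there are no pairs (x, y) ∈ (GF(p^m)^*)^2 satisfying simultaneously x^2 + y^2 = 1 and x^{p^k+1} - y^{p^k+1} = -b^{(p^k+1)/2}. -/
theorem stmt_17 (p m k : ℕ) (hp : p.Prime) (hodd : Odd p) (hm : 0 < m) (hk : 0 < k)
    (h3k : p ^ k % 4 = 3) (h3m : p ^ m % 4 = 3)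
    (F : Type*) [Field F] [Fintype F] (hcard : Fintype.card F = p ^ m)
    (b : F) (hb : b = 1 ∨ b = -1) :
    ¬ ∃ x y : F, x ≠ 0 ∧ y ≠ 0 ∧ x ^ 2 + y ^ 2 = 1 ∧
      x ^ (p ^ k + 1) - y ^ (p ^ k + 1) = -b ^ ((p ^ k + 1) / 2) := by
  haveI := Fact.mk hp
  -- characteristic of F is p
  have hchar : CharP F p := by
    have hr : CharP F (ringChar F) := ringChar.charP F
    obtain ⟨n, hnp, hcard'⟩ := FiniteField.card F (ringChar F)
    have hrp : (ringChar F).Prime := hnp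
    have hdvd : ringChar F ∣ p ^ m := by
      rw [← hcard, hcard']; exact dvd_pow_self _ n.pos.ne'
    have : ringChar F = p := by
      have := hrp.dvd_of_dvd_pow hdvd
      exact (Nat.prime_dvd_prime_iff_eq hrp hp).mp this
    rwa [this] at hr
  rintro ⟨x, y, hx, hy, hs, he⟩
  set q : ℕ := p ^ k with hq
  -- q % 4 = 3, so q = 2s+1 with s odd, and (q+1)/2 is even
  obtain ⟨t, ht⟩ : ∃ t, q = 4 * t + 3 := ⟨q / 4, by omega⟩
  have hbE : b ^ ((q + 1) / 2) = 1 := by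
    have h2 : (q + 1) / 2 = 2 * (t + 1) := by omega
    rcases hb with rfl | rfl
    · simp
    · rw [h2, pow_mul]; norm_num
  rw [hbE] at he
  -- Frobenius on the first equation
  have hXY : (x ^ q) ^ 2 + (y ^ q) ^ 2 = 1 := by
    have := congrArg (· ^ q) hs
    simp only [hq, add_pow_char_pow, one_pow] at this
    rw [← pow_right_comm, ← pow_right_comm y] at this
    exact this
  have h2 : x * x ^ q - y * y ^ q = -1 := by
    have : x ^ (q + 1) = x * x ^ q := by rw [pow_succ, mul_comm]
    have hy' : y ^ (q + 1) = y * y ^ q := by rw [pow_succ, mul_comm]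
    rw [this, hy'] at he; exact he
  have hv : x * y ^ q + y * x ^ q = 0 := by
    have hsq : (x * y ^ q + y * x ^ q) ^ 2 = 0 := by
      have key : (x * x ^ q - y * y ^ q) ^ 2 + (x * y ^ q + y * x ^ q) ^ 2
          = (x ^ 2 + y ^ 2) * ((x ^ q) ^ 2 + (y ^ q) ^ 2) := by ring
      rw [h2, hs, hXY] at key
      linear_combination key
    exact pow_eq_zero_iff (by norm_num : (2:ℕ) ≠ 0) |>.mp hsq
  -- derive x^(q-1) = - y^(q-1), with q - 1 = 2s
  set s : ℕ := 2 * t + 1 with hsdef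
  have hq2 : q = 2 * s + 1 := by omega
  have hxy2 : x ^ (2 * s) = -(y ^ (2 * s)) := by
    have h1 : x * (y * y ^ (2 * s)) + y * (x * x ^ (2 * s)) = 0 := by
      rw [show y * y ^ (2*s) = y ^ q by rw [hq2, pow_succ, mul_comm],
        show x * x ^ (2*s) = x ^ q by rw [hq2, pow_succ, mul_comm]]
      exact hv
    have hxy : x * y ≠ 0 := mul_ne_zero hx hy
    have : x * y * (y ^ (2*s) + x ^ (2*s)) = 0 := by linear_combination h1
    rcases mul_eq_zero.mp this with h | h
    · exact absurd h hxy
    · linear_combination h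
  -- -1 is a square, contradiction with card % 4 = 3
  have hys : y ^ s ≠ 0 := pow_ne_zero _ hy
  have hsqneg : IsSquare (-1 : F) := by
    refine ⟨x ^ s * (y ^ s)⁻¹, ?_⟩
    field_simp
    rw [← pow_mul, ← pow_mul, mul_comm s 2, hxy2]
  rw [FiniteField.isSquare_neg_one_iff, hcard] at hsqneg
  exact hsqneg h3m
end

section
/- Let p be an odd prime with p^k ≡ 3 (mod 4) and p^m ≡ 3 (mod 4), and let b ∈ GF(p^m). It is impossible that there exist simultaneously (x₂, y₂) ∈ (GF(p^m)^*)² with x₂² - y₂² = 1, x₂^{p^k+1} + y₂^{p^k+1} = -b^{(p^k+1)/2} and (x₃, y₃) ∈ (GF(p^m)^*)² with x₃² - y₃² = -1, x₃^{p^k+1} + y₃^{p^k+1} = b^{(p^k+1)/2}. -/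
lemma frob_sum_aux {F : Type*} [Field F] {p : ℕ} [ExpChar F p] (k : ℕ) (x y : F) :
    (x + y) ^ (p ^ k + 1) + (x - y) ^ (p ^ k + 1)
      = 2 * (x ^ (p ^ k + 1) + y ^ (p ^ k + 1)) := by
  have h1 : (x + y) ^ (p ^ k + 1) = (x ^ p ^ k + y ^ p ^ k) * (x + y) := by
    rw [pow_succ, add_pow_expChar_pow]
  have h2 : (x - y) ^ (p ^ k + 1) = (x ^ p ^ k - y ^ p ^ k) * (x - y) := by
    rw [pow_succ, sub_pow_expChar_pow]
  rw [h1, h2, pow_succ, pow_succ]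
  ring

theorem stmt_18 (p m k : ℕ) (hp : p.Prime) (hodd : Odd p) (hm : 0 < m) (hk : 0 < k)
    (h3k : p ^ k % 4 = 3) (h3m : p ^ m % 4 = 3)
    (F : Type*) [Field F] [Fintype F] (hcard : Fintype.card F = p ^ m)
    (b : F) :
    ¬ ((∃ x₂ y₂ : F, x₂ ≠ 0 ∧ y₂ ≠ 0 ∧ x₂ ^ 2 - y₂ ^ 2 = 1 ∧
          x₂ ^ (p ^ k + 1) + y₂ ^ (p ^ k + 1) = -b ^ ((p ^ k + 1) / 2)) ∧
        (∃ x₃ y₃ : F, x₃ ≠ 0 ∧ y₃ ≠ 0 ∧ x₃ ^ 2 - y₃ ^ 2 = -1 ∧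
          x₃ ^ (p ^ k + 1) + y₃ ^ (p ^ k + 1) = b ^ ((p ^ k + 1) / 2))) := by
  rintro ⟨⟨x₂, y₂, hx₂, hy₂, hd₂, hs₂⟩, ⟨x₃, y₃, hx₃, hy₃, hd₃, hs₃⟩⟩
  -- the characteristic is p
  haveI : Fact p.Prime := ⟨hp⟩
  have hr : ringChar F = p := by
    haveI := ringChar.charP F
    obtain ⟨n, hrp, hcardr⟩ := FiniteField.card F (ringChar F)
    have hdvd : p ∣ ringChar F ^ (n : ℕ) := by
      rw [← hcardr, hcard]
      exact dvd_pow_self p hm.ne'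
    exact ((Nat.prime_dvd_prime_iff_eq hp hrp).mp (hp.dvd_of_dvd_pow hdvd)).symm
  haveI : CharP F p := hr ▸ ringChar.charP F
  haveI : ExpChar F p := ExpChar.prime hp
  -- -1 is not a square
  have hns : ¬ IsSquare (-1 : F) := by
    rw [FiniteField.isSquare_neg_one_iff, hcard, h3m]
    simp
  -- q + 1 is even
  have hq1 : p ^ k + 1 = (p ^ k + 1) / 2 * 2 := by
    have : Even (p ^ k + 1) := (hodd.pow).add_one
    omega
  set t := (p ^ k + 1) / 2 with ht
  -- set up s and w
  set A : F := x₂ + y₂ with hA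
  set B : F := x₂ - y₂ with hB
  set C : F := x₃ + y₃ with hC
  set D : F := x₃ - y₃ with hD
  have hAB : A * B = 1 := by rw [hA, hB]; linear_combination hd₂
  have hCD : C * D = -1 := by rw [hC, hD]; linear_combination hd₃
  set s : F := A ^ (p ^ k + 1) with hs
  set s' : F := B ^ (p ^ k + 1) with hs'
  set w : F := C ^ (p ^ k + 1) with hw
  set w' : F := D ^ (p ^ k + 1) with hw'
  have hss' : s * s' = 1 := by
    rw [hs, hs', ← mul_pow, hAB, one_pow]
  have hww' : w * w' = 1 := by
    have hte : Even t := ⟨(p ^ k + 1) / 4, by rw [ht]; omega⟩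
    rw [hw, hw', ← mul_pow, hCD, hq1, mul_comm t 2, pow_mul]
    norm_num
  have e2 : s + s' = 2 * (-b ^ t) := by
    rw [hs, hs', hA, hB, frob_sum_aux, hs₂]
  have e3 : w + w' = 2 * (b ^ t) := by
    rw [hw, hw', hC, hD, frob_sum_aux, hs₃]
  have hsum0 : s + s' + w + w' = 0 := by linear_combination e2 + e3
  have hkey : (s + w) * (s * w + 1) = 0 := by
    linear_combination s * w * hsum0 - w * hss' - s * hww'
  -- s and w are nonzero squares
  have hA0 : A ≠ 0 := fun h => by simp [h] at hAB
  have hC0 : C ≠ 0 := fun h => by simp [h, eq_comm] at hCD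
  have hs0 : s ≠ 0 := pow_ne_zero _ hA0
  have hw0 : w ≠ 0 := pow_ne_zero _ hC0
  have hssq : s = (A ^ t) ^ 2 := by rw [hs, hq1, pow_mul]
  have hwsq : w = (C ^ t) ^ 2 := by rw [hw, hq1, pow_mul]
  rcases mul_eq_zero.mp hkey with h | h
  · -- w = -s, so -1 = (C^t / A^t)^2
    apply hns
    refine ⟨C ^ t * (A ^ t)⁻¹, ?_⟩
    have hAt : (A ^ t) ≠ 0 := pow_ne_zero _ hA0
    field_simp
    rw [← hssq, ← hwsq]
    linear_combination -h
  · -- s*w = -1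
    apply hns
    refine ⟨A ^ t * C ^ t, ?_⟩
    have : (A ^ t * C ^ t) * (A ^ t * C ^ t) = s * w := by
      rw [hssq, hwsq]; ring
    rw [this]
    linear_combination -h
end
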